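/- arXiv:1311.3490 — 7 statements merged into one kernel-verified Lean document; each statement's English description precedes it below -/
import Mathlib

section
/- Let 𝓗 be a pseudogroup of local transformations of a locally compact space Z, and let E be a recurrent finite symmetric family of generators of 𝓗 witnessed by a relatively compact open set U and radius R > 0. If V ⊆ Z is any open set that meets every 𝓗-orbit, then there exists S > 0 such that every d_E-ball of radius S in any 𝓗-orbit meets V. -/
open Topology Filter Set

/-- A pseudogroup of local transformations of a topological space. -/
structure IsPseudogroup {Z : Type*} [TopologicalSpace Z]
    (H : Set (OpenPartialHomeomorph Z Z)) : Prop where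
  id_mem : OpenPartialHomeomorph.refl Z ∈ H
  trans_mem : ∀ h ∈ H, ∀ g ∈ H, h.trans g ∈ H
  symm_mem : ∀ h ∈ H, h.symm ∈ H
  restr_mem : ∀ h ∈ H, ∀ s : Set Z, IsOpen s → h.restr s ∈ H

/-- The orbit of a point under a pseudogroup. -/
def pgOrbit {Z : Type*} [TopologicalSpace Z]
    (H : Set (OpenPartialHomeomorph Z Z)) (x : Z) : Set Z :=
  {y | ∃ h ∈ H, x ∈ h.source ∧ h x = y}

/- The word length `|h|_{E,x}` of `h` at `x ∈ dom h` with respect to a set of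
generators `E`: zero if `h` is the identity near `x`, and otherwise the least
`k` such that, on a neighborhood of `x`, `h` agrees with a composite of `k`
elements of `E`. -/
open Classical in
noncomputable def wordLen {Z : Type*} [TopologicalSpace Z]
    (E : Set (OpenPartialHomeomorph Z Z)) (h : OpenPartialHomeomorph Z Z) (x : Z) : ℕ∞ :=
  if ∀ᶠ y in 𝓝 x, h y = y then 0
  else sInf {n : ℕ∞ | ∃ l : List (OpenPartialHomeomorph Z Z), l ≠ [] ∧ (∀ g ∈ l, g ∈ E) ∧
      n = (l.length : ℕ∞) ∧
      x ∈ (l.foldl OpenPartialHomeomorph.trans (OpenPartialHomeomorph.refl Z)).source ∧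
      ∀ᶠ y in 𝓝 x, (l.foldl OpenPartialHomeomorph.trans (OpenPartialHomeomorph.refl Z)) y = h y}

/-- The metric `d_E` on orbits induced by a symmetric set of generators `E`. -/
noncomputable def dE {Z : Type*} [TopologicalSpace Z]
    (H E : Set (OpenPartialHomeomorph Z Z)) (x y : Z) : ℕ∞ :=
  sInf {n : ℕ∞ | ∃ h ∈ H, x ∈ h.source ∧ h x = y ∧ wordLen E h x = n}

/-!
The function `x ↦ d_E(x, V)` is finite, because `V` meets every orbit and elements of `𝓗` have
finite word length, and it is upper semicontinuous, because a word spelling `h` near `x` spells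
`h` at every nearby point and `V` is open. It is therefore bounded by some `M` on the compact set
`closure U`. Every point lies within `R` of `U`, so by the triangle inequality it lies within
`R + M` of `V`.
-/

theorem nonempty_of_sInf_ne_top {α : Type*} [CompleteLattice α] {s : Set α}
    (hs : sInf s ≠ ⊤) : s.Nonempty :=
  nonempty_iff_ne_empty.2 fun he => hs (by rw [he, sInf_empty])

/-- `wordComp [g₁, …, gₖ] = gₖ ∘ ⋯ ∘ g₁`. -/
def wordComp {Z : Type*} [TopologicalSpace Z] (l : List (OpenPartialHomeomorph Z Z)) :
    OpenPartialHomeomorph Z Z :=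
  l.foldl OpenPartialHomeomorph.trans (OpenPartialHomeomorph.refl Z)

structure IsWordAt {Z : Type*} [TopologicalSpace Z] (E : Set (OpenPartialHomeomorph Z Z))
    (l : List (OpenPartialHomeomorph Z Z)) (h : OpenPartialHomeomorph Z Z) (x : Z) : Prop where
  forall_mem : ∀ g ∈ l, g ∈ E
  mem_source : x ∈ (wordComp l).source
  eventuallyEq : wordComp l =ᶠ[𝓝 x] h

section WordLength

variable {Z : Type*} [TopologicalSpace Z] {E : Set (OpenPartialHomeomorph Z Z)}
  {l l₁ l₂ : List (OpenPartialHomeomorph Z Z)} {g h : OpenPartialHomeomorph Z Z} {x : Z}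

theorem foldl_trans_eq_trans_foldl (l : List (OpenPartialHomeomorph Z Z))
    (A : OpenPartialHomeomorph Z Z) :
    l.foldl OpenPartialHomeomorph.trans A = A.trans (wordComp l) := by
  induction l generalizing A with
  | nil => simp [wordComp, OpenPartialHomeomorph.trans_refl]
  | cons b l ih =>
    change List.foldl _ (A.trans b) l
      = A.trans (List.foldl _ ((OpenPartialHomeomorph.refl Z).trans b) l)
    rw [ih, ih, OpenPartialHomeomorph.refl_trans, OpenPartialHomeomorph.trans_assoc]

theorem wordComp_append (l₁ l₂ : List (OpenPartialHomeomorph Z Z)) :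
    wordComp (l₁ ++ l₂) = (wordComp l₁).trans (wordComp l₂) := by
  rw [wordComp, List.foldl_append, foldl_trans_eq_trans_foldl]
  rfl

theorem IsWordAt.append (h₁ : IsWordAt E l₁ h x) (h₂ : IsWordAt E l₂ g (h x))
    (hx : x ∈ h.source) : IsWordAt E (l₁ ++ l₂) (h.trans g) x where
  forall_mem f hf := (List.mem_append.1 hf).elim (h₁.forall_mem f) (h₂.forall_mem f)
  mem_source := by
    rw [wordComp_append, OpenPartialHomeomorph.trans_source]
    exact ⟨h₁.mem_source, by simpa [h₁.eventuallyEq.eq_of_nhds] using h₂.mem_source⟩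
  eventuallyEq := by
    filter_upwards [h₁.eventuallyEq, (h.continuousAt hx).eventually h₂.eventuallyEq]
      with y hy₁ hy₂
    simp [wordComp_append, hy₁, hy₂]

theorem IsWordAt.eventually (hl : IsWordAt E l h x) : ∀ᶠ z in 𝓝 x, IsWordAt E l h z := by
  filter_upwards [(wordComp l).open_source.mem_nhds hl.mem_source,
    hl.eventuallyEq.eventuallyEq_nhds] with z hz hz'
  exact ⟨hl.forall_mem, hz, hz'⟩

theorem wordLen_le_length (hl : IsWordAt E l h x) : wordLen E h x ≤ l.length := by
  unfold wordLen
  split_ifs with hid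
  · exact zero_le
  · have hne : l ≠ [] := by
      rintro rfl
      exact hid hl.eventuallyEq.symm
    exact sInf_le ⟨l, hne, hl.forall_mem, rfl, hl.mem_source, hl.eventuallyEq⟩

theorem exists_isWordAt_length_eq (hfin : wordLen E h x ≠ ⊤) :
    ∃ l, IsWordAt E l h x ∧ (l.length : ℕ∞) = wordLen E h x := by
  unfold wordLen at hfin ⊢
  split_ifs at hfin ⊢ with hid
  · exact ⟨[], ⟨by simp, mem_univ x, hid.mono fun _ hy => hy.symm⟩, rfl⟩
  · obtain ⟨l, -, hE, hlen, hsrc, heq⟩ := csInf_mem (nonempty_of_sInf_ne_top hfin)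
    exact ⟨l, ⟨hE, hsrc, heq⟩, hlen.symm⟩

theorem wordLen_trans_le (hx : x ∈ h.source) :
    wordLen E (h.trans g) x ≤ wordLen E h x + wordLen E g (h x) := by
  rcases eq_or_ne (wordLen E h x) ⊤ with hh | hh
  · simp [hh]
  rcases eq_or_ne (wordLen E g (h x)) ⊤ with hg | hg
  · simp [hg]
  obtain ⟨l₁, hl₁, hlen₁⟩ := exists_isWordAt_length_eq hh
  obtain ⟨l₂, hl₂, hlen₂⟩ := exists_isWordAt_length_eq hg
  calc wordLen E (h.trans g) x
      ≤ (l₁ ++ l₂).length := wordLen_le_length (hl₁.append hl₂ hx)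
    _ = wordLen E h x + wordLen E g (h x) := by
      rw [← hlen₁, ← hlen₂, List.length_append, Nat.cast_add]

theorem upperSemicontinuous_wordLen (E : Set (OpenPartialHomeomorph Z Z))
    (h : OpenPartialHomeomorph Z Z) : UpperSemicontinuous (wordLen E h) := by
  intro x r hr
  obtain ⟨l, hl, hlen⟩ := exists_isWordAt_length_eq hr.ne_top
  filter_upwards [hl.eventually] with z hz
  exact (wordLen_le_length hz).trans_lt (hlen ▸ hr)

end WordLength

noncomputable def infDE {Z : Type*} [TopologicalSpace Z] (H E : Set (OpenPartialHomeomorph Z Z))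
    (V : Set Z) (x : Z) : ℕ∞ :=
  ⨅ v ∈ V, dE H E x v

section OrbitMetric

variable {Z : Type*} [TopologicalSpace Z] {H E : Set (OpenPartialHomeomorph Z Z)}
  {h : OpenPartialHomeomorph Z Z} {V : Set Z} {x y : Z}

theorem dE_le_wordLen (hh : h ∈ H) (hx : x ∈ h.source) : dE H E x (h x) ≤ wordLen E h x :=
  sInf_le ⟨h, hh, hx, rfl, rfl⟩

theorem exists_wordLen_eq_dE (hfin : dE H E x y ≠ ⊤) :
    ∃ h ∈ H, x ∈ h.source ∧ h x = y ∧ wordLen E h x = dE H E x y :=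
  csInf_mem (nonempty_of_sInf_ne_top hfin)

theorem dE_triangle (hH : IsPseudogroup H) (x y z : Z) :
    dE H E x z ≤ dE H E x y + dE H E y z := by
  rcases eq_or_ne (dE H E x y) ⊤ with hxy | hxy
  · simp [hxy]
  rcases eq_or_ne (dE H E y z) ⊤ with hyz | hyz
  · simp [hyz]
  obtain ⟨h, hh, hx, rfl, hlen_h⟩ := exists_wordLen_eq_dE hxy
  obtain ⟨g, hg, hy, rfl, hlen_g⟩ := exists_wordLen_eq_dE hyz
  have hx' : x ∈ (h.trans g).source := by simp [hx, hy]
  calc dE H E x (g (h x)) ≤ wordLen E (h.trans g) x := dE_le_wordLen (hH.trans_mem h hh g hg) hx'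
    _ ≤ wordLen E h x + wordLen E g (h x) := wordLen_trans_le hx
    _ = dE H E x (h x) + dE H E (h x) (g (h x)) := by rw [hlen_h, hlen_g]

theorem upperSemicontinuous_infDE (hV : IsOpen V) : UpperSemicontinuous (infDE H E V) := by
  intro z r hr
  obtain ⟨v, hv, hzv⟩ : ∃ v ∈ V, dE H E z v < r := by simpa [infDE, iInf_lt_iff] using hr
  obtain ⟨_, ⟨h, hh, hz, rfl, rfl⟩, hlen⟩ := sInf_lt_iff.1 hzv
  filter_upwards [h.open_source.mem_nhds hz,
    (h.continuousAt hz).preimage_mem_nhds (hV.mem_nhds hv),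
    upperSemicontinuous_wordLen E h z r hlen] with z' hz' hV' hlen'
  calc infDE H E V z' ≤ dE H E z' (h z') := iInf₂_le (h z') hV'
    _ ≤ wordLen E h z' := dE_le_wordLen hh hz'
    _ < r := hlen'

theorem infDE_ne_top (hEgen : ∀ h ∈ H, ∀ x ∈ h.source, wordLen E h x ≠ ⊤)
    (hx : ∃ y ∈ V, y ∈ pgOrbit H x) : infDE H E V x ≠ ⊤ := by
  obtain ⟨_, hy, h, hh, hx, rfl⟩ := hx
  exact ne_top_of_le_ne_top (hEgen h hh x hx) ((iInf₂_le _ hy).trans (dE_le_wordLen hh hx))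

theorem infDE_le_dE_add (hH : IsPseudogroup H) (x y : Z) :
    infDE H E V x ≤ dE H E x y + infDE H E V y := by
  simp only [infDE, ENat.add_iInf]
  exact le_iInf₂ fun v hv => (iInf₂_le v hv).trans (dE_triangle hH x y v)

end OrbitMetric

theorem IsCompact.exists_forall_le_of_upperSemicontinuousOn {X : Type*} [TopologicalSpace X]
    {K : Set X} {f : X → ℕ∞} (hK : IsCompact K) (hf : UpperSemicontinuousOn f K)
    (hfin : ∀ x ∈ K, f x ≠ ⊤) : ∃ M : ℕ, ∀ x ∈ K, f x ≤ M := by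
  rcases K.eq_empty_or_nonempty with rfl | hne
  · exact ⟨0, by simp⟩
  obtain ⟨a, ha, hmax⟩ := hf.exists_isMaxOn hne hK
  obtain ⟨M, hM⟩ := ENat.ne_top_iff_exists.1 (hfin a ha)
  exact ⟨M, fun x hx => hM ▸ hmax hx⟩

theorem recurrent_generators_reach_any_open_set_meeting_orbits_general
    {Z : Type*} [TopologicalSpace Z]
    (H E : Set (OpenPartialHomeomorph Z Z)) (hH : IsPseudogroup H)
    (hEgen : ∀ h ∈ H, ∀ x ∈ h.source, wordLen E h x ≠ ⊤)
    (U : Set Z) (hUcpt : IsCompact (closure U))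
    (R : ℕ) (hRpos : 0 < R)
    (hrec : ∀ x : Z, ∃ y ∈ U, dE H E x y < (R : ℕ∞))
    (V : Set Z) (hVopen : IsOpen V)
    (hV : ∀ x : Z, ∃ y ∈ V, y ∈ pgOrbit H x) :
    ∃ S : ℕ, 0 < S ∧ ∀ x : Z, ∃ y ∈ V, dE H E x y < (S : ℕ∞) := by
  obtain ⟨M, hM⟩ := hUcpt.exists_forall_le_of_upperSemicontinuousOn
    ((upperSemicontinuous_infDE hVopen).upperSemicontinuousOn _)
    fun u _ => infDE_ne_top hEgen (hV u)
  refine ⟨R + M, by omega, fun x => ?_⟩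
  obtain ⟨u, hu, hxu⟩ := hrec x
  have hx : infDE H E V x < (R + M : ℕ) :=
    calc infDE H E V x ≤ dE H E x u + infDE H E V u := infDE_le_dE_add hH x u
      _ ≤ dE H E x u + M := by gcongr; exact hM u (subset_closure hu)
      _ < R + M := WithTop.add_lt_add_right (ENat.natCast_ne_top M) hxu
      _ = (R + M : ℕ) := (Nat.cast_add R M).symm
  simpa [infDE, iInf_lt_iff] using hx

/-- If `E` is a recurrent finite symmetric family of generators of a pseudogroup
`𝓗` of local transformations of a locally compact space, witnessed by a
relatively compact open set `U` and radius `R > 0`, then for every open set `V`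
meeting all `𝓗`-orbits there is `S > 0` such that every `d_E`-ball of radius
`S` in any orbit meets `V`. -/
theorem recurrent_generators_reach_any_open_set_meeting_orbits
    {Z : Type*} [TopologicalSpace Z] [LocallyCompactSpace Z]
    (H E : Set (OpenPartialHomeomorph Z Z)) (hH : IsPseudogroup H)
    (hEH : E ⊆ H) (hEfin : E.Finite) (hEsymm : ∀ g ∈ E, g.symm ∈ E)
    (hEgen : ∀ h ∈ H, ∀ x ∈ h.source, wordLen E h x ≠ ⊤)
    (U : Set Z) (hUopen : IsOpen U) (hUcpt : IsCompact (closure U))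
    (R : ℕ) (hRpos : 0 < R)
    (hrec : ∀ x : Z, ∃ y ∈ U, dE H E x y < (R : ℕ∞))
    (V : Set Z) (hVopen : IsOpen V)
    (hV : ∀ x : Z, ∃ y ∈ V, y ∈ pgOrbit H x) :
    ∃ S : ℕ, 0 < S ∧ ∀ x : Z, ∃ y ∈ V, dE H E x y < (S : ℕ∞) :=
  recurrent_generators_reach_any_open_set_meeting_orbits_general H E hH hEgen U hUcpt R hRpos hrec V
    hVopen hV
end

section
/- Two metric spaces M and M' are coarsely quasi-isometric if and only if there exist metric spaces N and N' such that M is Hausdorff equivalent to N, M' is Hausdorff equivalent to N', and N is Lipschitz equivalent (bi-Lipschitz bijective) to N'. -/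
open Set

/-- A net in a metric space: a subset `A` with `d(x,A) < C` for some `C > 0`
and all `x`. -/
def IsNet {M : Type*} [MetricSpace M] (A : Set M) : Prop :=
  ∃ C > (0:ℝ), ∀ x : M, ∃ a ∈ A, dist x a < C

/-- Two metric spaces are coarsely quasi-isometric if there is a bi-Lipschitz
bijection between a net of one and a net of the other. -/
def CoarselyQuasiIsometric (M M' : Type) [MetricSpace M] [MetricSpace M'] : Prop :=
  ∃ (A : Set M) (A' : Set M') (f : A → A'), IsNet A ∧ IsNet A' ∧
    Function.Bijective f ∧
    ∃ K > (0:ℝ), ∀ a b : A,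
      dist (f a : M') (f b) ≤ K * dist (a : M) b ∧
      dist (a : M) b ≤ K * dist (f a : M') (f b)

/-- `M` and `N` are Hausdorff equivalent if their Gromov–Hausdorff distance is
finite, i.e. there is a metric on `M ⊔ N` restricting to the given metrics for
which `M` and `N` are at finite Hausdorff distance. -/
def HausdorffEquivalent (M N : Type) [MetricSpace M] [MetricSpace N] : Prop :=
  ∃ d : M ⊕ N → M ⊕ N → ℝ,
    (∀ x y, d x y = d y x) ∧ (∀ x, d x x = 0) ∧
    (∀ x y z, d x z ≤ d x y + d y z) ∧
    (∀ x y, d x y = 0 → x = y) ∧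
    (∀ x y : M, d (.inl x) (.inl y) = dist x y) ∧
    (∀ x y : N, d (.inr x) (.inr y) = dist x y) ∧
    ∃ r : ℝ, (∀ x : M, ∃ y : N, d (.inl x) (.inr y) ≤ r) ∧
      (∀ y : N, ∃ x : M, d (.inl x) (.inr y) ≤ r)

/-- Two metric spaces are Lipschitz equivalent if there is a bi-Lipschitz
bijection between them. -/
def LipschitzEquivalent (N N' : Type) [MetricSpace N] [MetricSpace N'] : Prop :=
  ∃ f : N → N', Function.Bijective f ∧
    ∃ K > (0:ℝ), ∀ x y : N,
      dist (f x) (f y) ≤ K * dist x y ∧ dist x y ≤ K * dist (f x) (f y)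

lemma net_hausdorffEquivalent {M : Type} [MetricSpace M] {A : Set M} (hA : IsNet A) :
    HausdorffEquivalent M ↥A := by
  obtain ⟨C, hC, hnet⟩ := hA
  refine ⟨fun p q => match p, q with
    | .inl x, .inl y => dist x y
    | .inl x, .inr a => dist x a.1 + 1
    | .inr a, .inl x => dist x a.1 + 1
    | .inr a, .inr b => dist a.1 b.1, ?_, ?_, ?_, ?_, ?_, ?_, ?_⟩
  · rintro (x|a) (y|b) <;> simp [dist_comm]
  · rintro (x|a) <;> simp
  · rintro (x|a) (y|b) (z|c) <;> simp
    · exact dist_triangle _ _ _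
    · have := dist_triangle x y c.1; linarith
    · have := dist_triangle x b.1 z; rw [dist_comm z b.1]; linarith
    · have := dist_triangle x b.1 c.1; linarith
    · have := dist_triangle z y a.1; rw [dist_comm z a.1, dist_comm z y] at *; linarith
    · have := dist_triangle a.1 y c.1; rw [dist_comm a.1 y] at this; linarith
    · have := dist_triangle z b.1 a.1
      rw [dist_comm z a.1, dist_comm b.1 a.1, dist_comm z b.1] at *; linarith
    · exact dist_triangle _ _ _
  · rintro (x|a) (y|b) h
    · exact congrArg _ (dist_eq_zero.mp h)
    · have h' : dist x b.1 + 1 = 0 := h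
      exact ((by linarith [dist_nonneg (x := x) (y := b.1)] : False)).elim
    · have h' : dist y a.1 + 1 = 0 := h
      exact ((by linarith [dist_nonneg (x := y) (y := a.1)] : False)).elim
    · exact congrArg _ (Subtype.ext (dist_eq_zero.mp h))
  · intro x y; rfl
  · intro x y; exact (Subtype.dist_eq x y).symm
  · refine ⟨C + 1, fun x => ?_, fun a => ?_⟩
    · obtain ⟨a, ha, hd⟩ := hnet x
      exact ⟨⟨a, ha⟩, by simpa using hd.le⟩
    · exact ⟨a.1, by simp; linarith⟩

private lemma key_dist {M N : Type} [MetricSpace M] [MetricSpace N]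
    (d : M ⊕ N → M ⊕ N → ℝ)
    (dsymm : ∀ x y, d x y = d y x)
    (dtri : ∀ x y z, d x z ≤ d x y + d y z)
    (dMM : ∀ x y : M, d (.inl x) (.inl y) = dist x y)
    (dNN : ∀ x y : N, d (.inr x) (.inr y) = dist x y)
    {x y : M} {n m : N} {r : ℝ}
    (hx : d (.inl x) (.inr n) ≤ r) (hy : d (.inl y) (.inr m) ≤ r) :
    dist x y ≤ dist n m + 2*r ∧ dist n m ≤ dist x y + 2*r := by
  have hy' : d (Sum.inr m) (Sum.inl y) ≤ r := by rw [dsymm]; exact hy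
  have hx' : d (Sum.inr n) (Sum.inl x) ≤ r := by rw [dsymm]; exact hx
  constructor
  · calc dist x y = d (Sum.inl x) (Sum.inl y) := (dMM x y).symm
      _ ≤ d (Sum.inl x) (Sum.inr n) + d (Sum.inr n) (Sum.inl y) := dtri _ _ _
      _ ≤ r + (d (Sum.inr n) (Sum.inr m) + d (Sum.inr m) (Sum.inl y)) := by
          linarith [dtri (Sum.inr n) (Sum.inr m) (Sum.inl y)]
      _ ≤ dist n m + 2*r := by rw [dNN]; linarith
  · calc dist n m = d (Sum.inr n) (Sum.inr m) := (dNN n m).symm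
      _ ≤ d (Sum.inr n) (Sum.inl x) + d (Sum.inl x) (Sum.inr m) := dtri _ _ _
      _ ≤ r + (d (Sum.inl x) (Sum.inl y) + d (Sum.inl y) (Sum.inr m)) := by
          linarith [dtri (Sum.inl x) (Sum.inl y) (Sum.inr m)]
      _ ≤ dist x y + 2*r := by rw [dMM]; linarith

private lemma backward_cqi {M M' N N' : Type} [MetricSpace M] [MetricSpace M']
    [MetricSpace N] [MetricSpace N']
    (hMN : HausdorffEquivalent M N) (hM'N' : HausdorffEquivalent M' N')
    (hL : LipschitzEquivalent N N') : CoarselyQuasiIsometric M M' := by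
  obtain ⟨d, dsymm, drefl, dtri, _, dMM, dNN, r, hr1, hr2⟩ := hMN
  obtain ⟨d', dsymm', drefl', dtri', _, dMM', dNN', r', hr1', hr2'⟩ := hM'N'
  obtain ⟨g, gbij, K, hK, hg⟩ := hL
  by_cases hN : Nonempty N
  case neg =>
    have hM : IsEmpty M := ⟨fun x => hN ⟨(hr1 x).choose⟩⟩
    have hN' : IsEmpty N' := ⟨fun y => hN ⟨(gbij.2 y).choose⟩⟩
    have hM' : IsEmpty M' := ⟨fun x => hN'.false (hr1' x).choose⟩
    refine ⟨∅, ∅, fun a => absurd a.2 (notMem_empty _),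
      ⟨1, one_pos, fun x => (hM.false x).elim⟩,
      ⟨1, one_pos, fun x => (hM'.false x).elim⟩,
      ⟨fun a => absurd a.2 (notMem_empty _), fun b => absurd b.2 (notMem_empty _)⟩,
      1, one_pos, fun a => absurd a.2 (notMem_empty _)⟩
  case pos =>
  -- nonnegativity
  have dnn : ∀ p q, 0 ≤ d p q := fun p q => by
    have h1 := dtri p q p; rw [drefl, dsymm q p] at h1; linarith
  have dnn' : ∀ p q, 0 ≤ d' p q := fun p q => by
    have h1 := dtri' p q p; rw [drefl', dsymm' q p] at h1; linarith
  obtain ⟨n0⟩ := hN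
  have hr : 0 ≤ r := le_trans (dnn _ _) (hr2 n0).choose_spec
  have hr' : 0 ≤ r' := le_trans (dnn' _ _) (hr2' (g n0)).choose_spec
  choose φ hφ using hr2
  choose ψ hψ using hr2'
  -- constants
  set D : ℝ := max (max (4*r) (4*K*r')) 1 with hD
  have hD1 : (1:ℝ) ≤ D := le_max_right _ _
  have hD0 : (0:ℝ) < D := lt_of_lt_of_le one_pos hD1
  have hDr : 4*r ≤ D := le_trans (le_max_left _ _) (le_max_left _ _)
  have hDr' : 4*K*r' ≤ D := le_trans (le_max_right _ _) (le_max_left _ _)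
  -- maximal D-separated set
  obtain ⟨S, hSmax⟩ := zorn_subset {S : Set N | ∀ s ∈ S, ∀ t ∈ S, s ≠ t → D ≤ dist s t}
    (fun c hc hchain => ⟨⋃₀ c, fun s hs t ht hst => by
      obtain ⟨a, hac, hsa⟩ := hs
      obtain ⟨b, hbc, htb⟩ := ht
      rcases hchain.total hac hbc with h | h
      · exact hc hbc s (h hsa) t htb hst
      · exact hc hac s hsa t (h htb) hst,
      fun s hs => subset_sUnion_of_mem hs⟩)
  have hSsep : ∀ s ∈ S, ∀ t ∈ S, s ≠ t → D ≤ dist s t := hSmax.1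
  have Snet : ∀ n : N, ∃ s ∈ S, dist n s < D := by
    intro n
    by_contra hcon
    push_neg at hcon
    have hins : insert n S ∈ {S : Set N | ∀ s ∈ S, ∀ t ∈ S, s ≠ t → D ≤ dist s t} := by
      rintro s (rfl | hs) t (rfl | ht) hst
      · exact absurd rfl hst
      · exact hcon t ht
      · rw [dist_comm]; exact hcon s hs
      · exact hSsep s hs t ht hst
    have : n ∈ S := hSmax.2 hins (subset_insert n S) (mem_insert n S)
    have := hcon n this
    rw [dist_self] at this
    linarith
  -- injectivity on S
  have injφ : ∀ s ∈ S, ∀ t ∈ S, φ s = φ t → s = t := by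
    intro s hs t ht hft
    by_contra hst
    have h1 := (key_dist d dsymm dtri dMM dNN (hφ s) (hφ t)).2
    rw [hft, dist_self] at h1
    have := hSsep s hs t ht hst
    linarith
  have injψg : ∀ s ∈ S, ∀ t ∈ S, ψ (g s) = ψ (g t) → s = t := by
    intro s hs t ht hft
    by_contra hst
    have h1 := (key_dist d' dsymm' dtri' dMM' dNN' (hψ (g s)) (hψ (g t))).2
    rw [hft, dist_self] at h1
    have hg2 := (hg s t).2
    have := hSsep s hs t ht hst
    nlinarith
  -- the nets
  have hmemA : ∀ a : ↥(φ '' S), ∃ s ∈ S, φ s = a.1 := fun a => a.2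
  choose sel hsel1 hsel2 using hmemA
  have hsel_uniq : ∀ (a : ↥(φ '' S)) (s : N), s ∈ S → φ s = a.1 → sel a = s :=
    fun a s hs hphis => injφ _ (hsel1 a) _ hs (by rw [hsel2 a, hphis])
  refine ⟨φ '' S, (fun s => ψ (g s)) '' S,
    fun a => ⟨ψ (g (sel a)), mem_image_of_mem _ (hsel1 a)⟩, ?_, ?_, ⟨?_, ?_⟩, ?_⟩
  · -- IsNet (φ '' S)
    refine ⟨D + 2*r + 1, by linarith, fun x => ?_⟩
    obtain ⟨n, hn⟩ := hr1 x
    obtain ⟨s, hs, hns⟩ := Snet n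
    have := (key_dist d dsymm dtri dMM dNN hn (hφ s)).1
    exact ⟨φ s, mem_image_of_mem _ hs, by linarith⟩
  · -- IsNet ((ψ ∘ g) '' S)
    refine ⟨K*D + 2*r' + 1, by nlinarith, fun x => ?_⟩
    obtain ⟨n', hn'⟩ := hr1' x
    obtain ⟨n, rfl⟩ := gbij.2 n'
    obtain ⟨s, hs, hns⟩ := Snet n
    have h1 := (key_dist d' dsymm' dtri' dMM' dNN' hn' (hψ (g s))).1
    have h2 := (hg n s).1
    have h3 : K * dist n s ≤ K * D := by nlinarith
    exact ⟨ψ (g s), mem_image_of_mem _ hs, by linarith⟩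
  · -- injective
    intro a b hab
    have h1 : ψ (g (sel a)) = ψ (g (sel b)) := congrArg Subtype.val hab
    have h2 : sel a = sel b := injψg _ (hsel1 a) _ (hsel1 b) h1
    apply Subtype.ext
    rw [← hsel2 a, ← hsel2 b, h2]
  · -- surjective
    rintro ⟨b, s, hs, rfl⟩
    refine ⟨⟨φ s, mem_image_of_mem _ hs⟩, ?_⟩
    apply Subtype.ext
    show ψ (g (sel _)) = ψ (g s)
    rw [hsel_uniq _ s hs rfl]
  · -- bi-Lipschitz
    refine ⟨4*K, by linarith, fun a b => ?_⟩
    show dist (ψ (g (sel a))) (ψ (g (sel b))) ≤ 4*K * dist a.1 b.1 ∧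
      dist a.1 b.1 ≤ 4*K * dist (ψ (g (sel a))) (ψ (g (sel b)))
    set s := sel a with hsdef
    set t := sel b with htdef
    by_cases hst : s = t
    · have hab : a.1 = b.1 := by rw [← hsel2 a, ← hsel2 b, ← hsdef, ← htdef, hst]
      rw [hst, hab, dist_self, dist_self]
      constructor <;> simp
    · have hDst : D ≤ dist s t := hSsep s (hsel1 a) t (hsel1 b) hst
      have h1 := key_dist d dsymm dtri dMM dNN (hφ s) (hφ t)
      rw [hsel2 a, hsel2 b] at h1  -- might fail; s := sel a
      have h2 := key_dist d' dsymm' dtri' dMM' dNN' (hψ (g s)) (hψ (g t))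
      have hg1 := (hg s t).1
      have hg2 := (hg s t).2
      have hgst_lb : 4*r' ≤ dist (g s) (g t) := by nlinarith
      have hab_lb : dist s t ≤ 2 * dist a.1 b.1 := by linarith [h1.2]
      have hfab_lb : dist (g s) (g t) ≤ 2 * dist (ψ (g s)) (ψ (g t)) := by linarith [h2.2]
      have hp1 : K * dist s t ≤ K * (2 * dist a.1 b.1) :=
        mul_le_mul_of_nonneg_left hab_lb hK.le
      have hp2 : K * dist (g s) (g t) ≤ K * (2 * dist (ψ (g s)) (ψ (g t))) :=
        mul_le_mul_of_nonneg_left hfab_lb hK.le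
      have hnn1 : 0 ≤ K * dist a.1 b.1 := mul_nonneg hK.le dist_nonneg
      have hnn2 : 0 ≤ K * dist (ψ (g s)) (ψ (g t)) := mul_nonneg hK.le dist_nonneg
      constructor
      · -- dist fa fb ≤ gst + 2r' ≤ (3/2) gst ≤ (3/2) K st ≤ 3 K ab ≤ 4 K ab
        nlinarith [h2.1]
      · nlinarith [h1.1]

/-- Two metric spaces `M`, `M'` are coarsely quasi-isometric iff there are
metric spaces `N`, `N'` with `M` Hausdorff equivalent to `N`, `M'` Hausdorff
equivalent to `N'`, and `N` Lipschitz equivalent to `N'`. -/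
theorem coarselyQuasiIsometric_iff_hausdorff_and_lipschitz
    (M M' : Type) [MetricSpace M] [MetricSpace M'] :
    CoarselyQuasiIsometric M M' ↔
      ∃ (N N' : Type) (_ : MetricSpace N) (_ : MetricSpace N'),
        HausdorffEquivalent M N ∧ HausdorffEquivalent M' N' ∧
          LipschitzEquivalent N N' := by
  constructor
  · rintro ⟨A, A', f, hA, hA', hbij, K, hK, hf⟩
    refine ⟨↥A, ↥A', inferInstance, inferInstance,
      net_hausdorffEquivalent hA, net_hausdorffEquivalent hA', f, hbij, K, hK, fun x y => ?_⟩
    rw [Subtype.dist_eq, Subtype.dist_eq]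
    exact hf x y
  · rintro ⟨N, N', iN, iN', hMN, hM'N', hL⟩
    exact backward_cqi hMN hM'N' hL
end

section
/- Let Γ be a quasi-lattice in a metric space, let C > 1, let A ⊆ Γ be such that every point of Γ is within distance C of A, and let K > 0 be such that every ball of radius C in Γ contains at most K points of Γ. Then for every subset S ⊆ Γ one has #S ≤ #(S ∩ ∂_C^Γ S) + K · #(A ∩ S). -/
open Set Metric

/-- The `r`-boundary of `S` inside `Γ` (with the metric induced from the
ambient space): points of `Γ` at distance `< r` both from `S` and from
`Γ \ S`. (Distance to the empty set is `∞`.) -/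
def rBoundary {M : Type*} [MetricSpace M] (Γ S : Set M) (r : ℝ) : Set M :=
  {x ∈ Γ | EMetric.infEdist x S < ENNReal.ofReal r ∧
    EMetric.infEdist x (Γ \ S) < ENNReal.ofReal r}

/- A point of `S` covered by a net point lying outside `S` is a boundary point, so every
non-boundary point of `S` lies in the `C`-ball around some net point of `A ∩ S`. Summing
the ball bound `K` over `A ∩ S` bounds the non-boundary part of `S` by `K · #(A ∩ S)`. -/

theorem Set.encard_biUnion_le_mul {ι α : Type*} {t : Set ι} {s : ι → Set α} {K : ℕ∞}
    (h : ∀ i ∈ t, (s i).encard ≤ K) : (⋃ i ∈ t, s i).encard ≤ K * t.encard := by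
  obtain ht | ht := t.finite_or_infinite
  · lift t to Finset ι using ht
    calc (⋃ i ∈ (t : Set ι), s i).encard ≤ ∑ i ∈ t, (s i).encard := t.set_encard_biUnion_le s
      _ ≤ t.card • K := Finset.sum_le_card_nsmul _ _ _ h
      _ = K * (t : Set ι).encard := by simp [mul_comm]
  · rcases eq_or_ne K 0 with rfl | hK
    · simp_all
    · rw [ht.encard_eq, ENat.mul_top hK]
      exact le_top

section rBoundary

variable {M : Type*} [MetricSpace M] {Γ S : Set M} {r : ℝ}

theorem mem_rBoundary_of_dist_lt {x a : M} (hxΓ : x ∈ Γ) (hxS : x ∈ S) (ha : a ∈ Γ \ S)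
    (hxa : dist x a < r) : x ∈ rBoundary Γ S r := by
  have hr : 0 < r := dist_nonneg.trans_lt hxa
  refine ⟨hxΓ, ?_, ?_⟩
  · exact (infEDist_zero_of_mem hxS).trans_lt (ENNReal.ofReal_pos.mpr hr)
  · calc infEDist x (Γ \ S) ≤ edist x a := infEDist_le_edist_of_mem ha
      _ < ENNReal.ofReal r := by rwa [edist_dist, ENNReal.ofReal_lt_ofReal_iff hr]

theorem diff_rBoundary_subset_biUnion_ball {A : Set M} (hS : S ⊆ Γ) (hA : A ⊆ Γ)
    (hAnet : ∀ x ∈ Γ, ∃ a ∈ A, dist x a < r) :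
    S \ rBoundary Γ S r ⊆ ⋃ a ∈ A ∩ S, Γ ∩ ball a r := by
  rintro x ⟨hxS, hxB⟩
  obtain ⟨a, haA, hxa⟩ := hAnet x (hS hxS)
  have haS : a ∈ S := by
    by_contra haS
    exact hxB (mem_rBoundary_of_dist_lt (hS hxS) hxS ⟨hA haA, haS⟩ hxa)
  exact mem_biUnion ⟨haA, haS⟩ ⟨hS hxS, mem_ball.mpr hxa⟩

end rBoundary

theorem card_le_boundary_add_net_general
    {M : Type*} [MetricSpace M] (Γ : Set M)
    (C : ℝ)
    (A : Set M) (hA : A ⊆ Γ)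
    (hAnet : ∀ x ∈ Γ, ∃ a ∈ A, dist x a < C)
    (K : ℕ∞)
    (hball : ∀ x ∈ Γ, (Γ ∩ Metric.ball x C).encard ≤ K) :
    ∀ S ⊆ Γ, S.encard ≤ (S ∩ rBoundary Γ S C).encard + K * (A ∩ S).encard := by
  intro S hS
  have hinterior : (S \ rBoundary Γ S C).encard ≤ K * (A ∩ S).encard :=
    (encard_le_encard (diff_rBoundary_subset_biUnion_ball hS hA hAnet)).trans
      (encard_biUnion_le_mul fun a ha => hball a (hA ha.1))
  calc S.encard = (S ∩ rBoundary Γ S C).encard + (S \ rBoundary Γ S C).encard := by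
        rw [add_comm, encard_sdiff_add_encard_inter]
    _ ≤ (S ∩ rBoundary Γ S C).encard + K * (A ∩ S).encard := by gcongr

/-- Let `Γ` be a quasi-lattice in a metric space, `C > 1`, `A ⊆ Γ` a `C`-net in
`Γ`, and `K > 0` a bound for the number of points of `Γ` in any ball of radius
`C`. Then `#S ≤ #(S ∩ ∂_C^Γ S) + K·#(A ∩ S)` for every `S ⊆ Γ`. -/
theorem card_le_boundary_add_net
    {M : Type*} [MetricSpace M] (Γ : Set M)
    (hΓnet : ∃ C₀ > (0:ℝ), ∀ x : M, ∃ a ∈ Γ, dist x a < C₀)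
    (hΓlattice : ∀ r : ℝ, 0 ≤ r → ∃ Kr : ℕ, ∀ x : M,
      (Γ ∩ Metric.ball x r).encard ≤ (Kr : ℕ∞))
    (C : ℝ) (hC : 1 < C)
    (A : Set M) (hA : A ⊆ Γ)
    (hAnet : ∀ x ∈ Γ, ∃ a ∈ A, dist x a < C)
    (K : ℕ∞) (hK : 0 < K)
    (hball : ∀ x ∈ Γ, (Γ ∩ Metric.ball x C).encard ≤ K) :
    ∀ S ⊆ Γ, S.encard ≤ (S ∩ rBoundary Γ S C).encard + K * (A ∩ S).encard :=
  card_le_boundary_add_net_general Γ C A hA hAnet K hball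
end

section
/- Let M be a connected graph with all vertex degrees bounded by K, viewed as a metric space with the path metric on vertices. Then for every finite vertex set S and r > 0, the r-boundary satisfies #∂_r S ≤ K^r · #∂S, where ∂S is the set of vertices of S adjacent to some vertex outside S. Consequently M is amenable as a metric space if and only if it is Følner as a graph. -/
open Set Filter Topology

/-!
If `x ∈ S` is at distance `< r` from some `y ∉ S`, then along a geodesic from `x` to `y`
the last vertex before leaving `S` lies in `∂S` and is at distance `< r` from `x`. Hence
`∂_r S` is covered by the balls of radius `r` around the points of `∂S`, and such a ball has
at most `1 + K + ⋯ + K^(r-1) < K^r` points when `K ≥ 2`. Since conversely `∂S ⊆ ∂_2 S`,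
the Følner ratios for `∂S` and for every `∂_r S` tend to zero together.
-/

theorem Set.encard_biUnion_le_ncard_mul {ι α : Type*} {t : Set ι} (ht : t.Finite)
    {s : ι → Set α} {m : ℕ∞} (h : ∀ i ∈ t, (s i).encard ≤ m) :
    (⋃ i ∈ t, s i).encard ≤ t.ncard * m := by
  have hunion : (⋃ i ∈ t, s i) = ⋃ i ∈ ht.toFinset, s i := by simp
  calc (⋃ i ∈ t, s i).encard
      ≤ ∑ i ∈ ht.toFinset, (s i).encard := hunion ▸ ht.toFinset.set_encard_biUnion_le s
    _ ≤ ht.toFinset.card • m := Finset.sum_le_card_nsmul _ _ _ (by simpa using h)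
    _ = t.ncard * m := by rw [nsmul_eq_mul, ncard_eq_toFinset_card t ht]

theorem tendsto_ncard_div_of_ncard_le_mul {α : Type*} {A B S : ℕ → Set α} (C : ℕ)
    (hAB : ∀ n, (A n).ncard ≤ C * (B n).ncard)
    (hB : Tendsto (fun n => ((B n).ncard : ℝ) / (S n).ncard) atTop (𝓝 0)) :
    Tendsto (fun n => ((A n).ncard : ℝ) / (S n).ncard) atTop (𝓝 0) := by
  refine squeeze_zero (fun n => by positivity) (fun n => ?_) (by simpa using hB.const_mul (C : ℝ))
  rw [← mul_div_assoc]
  gcongr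
  exact_mod_cast hAB n

namespace SimpleGraph

variable {V : Type*} (G : SimpleGraph V)

def boundary (S : Set V) : Set V := {x ∈ S | ∃ y ∉ S, G.Adj x y}

def distBoundary (r : ℕ) (S : Set V) : Set V := {x ∈ S | ∃ y ∉ S, G.dist x y < r}

variable {G}

theorem boundary_subset_distBoundary_two (S : Set V) : G.boundary S ⊆ G.distBoundary 2 S := by
  rintro x ⟨hx, y, hy, hxy⟩
  exact ⟨hx, y, hy, by simp [dist_eq_one_iff_adj.mpr hxy]⟩

theorem Walk.exists_mem_boundary_length_lt {S : Set V} {x y : V} (w : G.Walk x y)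
    (hx : x ∈ S) (hy : y ∉ S) :
    ∃ b ∈ G.boundary S, ∃ p : G.Walk x b, p.length < w.length := by
  induction w with
  | nil => exact absurd hx hy
  | @cons x z y hxz q ih =>
    by_cases hz : z ∈ S
    · obtain ⟨b, hb, p, hp⟩ := ih hz hy
      exact ⟨b, hb, .cons hxz p, by simpa using hp⟩
    · exact ⟨x, ⟨hx, z, hz, hxz⟩, .nil, by simp⟩

theorem Connected.distBoundary_subset_biUnion (hconn : G.Connected) (r : ℕ) (S : Set V) :
    G.distBoundary r S ⊆ ⋃ b ∈ G.boundary S, {x | G.dist b x < r} := by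
  rintro x ⟨hx, y, hy, hxy⟩
  obtain ⟨w, hw⟩ := hconn.exists_walk_length_eq_dist x y
  obtain ⟨b, hb, p, hp⟩ := w.exists_mem_boundary_length_lt hx hy
  have hxb : G.dist x b < r :=
    calc G.dist x b ≤ p.length := dist_le p
      _ < w.length := hp
      _ < r := hw ▸ hxy
  exact mem_biUnion hb (show G.dist b x < r by rwa [dist_comm])

theorem Connected.setOf_dist_lt_succ_subset (hconn : G.Connected) (b : V) (r : ℕ) :
    {x | G.dist b x < r + 1} ⊆ insert b (⋃ z ∈ G.neighborSet b, {x | G.dist z x < r}) := by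
  intro x (hx : G.dist b x < r + 1)
  obtain ⟨w, hw⟩ := hconn.exists_walk_length_eq_dist b x
  cases w with
  | nil => exact mem_insert b _
  | @cons _ z _ hbz q =>
    refine mem_insert_of_mem b (mem_biUnion hbz ?_)
    have hq : G.dist z x ≤ q.length := dist_le q
    rw [Walk.length_cons] at hw
    show G.dist z x < r
    omega

theorem Connected.encard_setOf_dist_lt_le (hconn : G.Connected) {K : ℕ}
    (hdeg : ∀ v, (G.neighborSet v).encard ≤ K) (r : ℕ) (b : V) :
    {x | G.dist b x < r}.encard ≤ ∑ i ∈ Finset.range r, (K : ℕ∞) ^ i := by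
  induction r generalizing b with
  | zero => simp
  | succ r ih =>
    obtain ⟨hfin, hcard⟩ := encard_le_coe_iff_finite_ncard_le.mp (hdeg b)
    calc {x | G.dist b x < r + 1}.encard
        ≤ (insert b (⋃ z ∈ G.neighborSet b, {x | G.dist z x < r})).encard :=
          encard_le_encard (hconn.setOf_dist_lt_succ_subset b r)
      _ ≤ (⋃ z ∈ G.neighborSet b, {x | G.dist z x < r}).encard + 1 := encard_insert_le _ _
      _ ≤ (G.neighborSet b).ncard * ∑ i ∈ Finset.range r, (K : ℕ∞) ^ i + 1 := by
          gcongr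
          exact encard_biUnion_le_ncard_mul hfin fun z _ => ih z
      _ ≤ K * ∑ i ∈ Finset.range r, (K : ℕ∞) ^ i + 1 := by gcongr
      _ = ∑ i ∈ Finset.range (r + 1), (K : ℕ∞) ^ i := geom_sum_succ.symm

theorem Walk.eq_or_adj_of_encard_neighborSet_le_one
    (hdeg : ∀ v, (G.neighborSet v).encard ≤ 1) {x y : V} (w : G.Walk x y) :
    x = y ∨ G.Adj x y := by
  induction w with
  | nil => exact .inl rfl
  | @cons x z y hxz q ih =>
    rcases ih with rfl | hzy
    · exact .inr hxz
    · exact .inl (encard_le_one_iff.mp (hdeg z) _ _ hxz.symm hzy)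

theorem Connected.distBoundary_subset_boundary (hconn : G.Connected)
    (hdeg : ∀ v, (G.neighborSet v).encard ≤ 1) (r : ℕ) (S : Set V) :
    G.distBoundary r S ⊆ G.boundary S := by
  rintro x ⟨hx, y, hy, -⟩
  rcases (hconn x y).some.eq_or_adj_of_encard_neighborSet_le_one hdeg with rfl | hxy
  · exact absurd hx hy
  · exact ⟨hx, y, hy, hxy⟩

theorem Connected.encard_distBoundary_le (hconn : G.Connected) {K : ℕ} (hK : 2 ≤ K)
    (hdeg : ∀ v, (G.neighborSet v).encard ≤ K) {S : Set V} (hbdry : (G.boundary S).Finite)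
    (r : ℕ) : (G.distBoundary r S).encard ≤ (G.boundary S).ncard * K ^ r := by
  have hball (b : V) : {x | G.dist b x < r}.encard ≤ K ^ r :=
    calc {x | G.dist b x < r}.encard ≤ ∑ i ∈ Finset.range r, (K : ℕ∞) ^ i :=
          hconn.encard_setOf_dist_lt_le hdeg r b
      _ ≤ K ^ r := by exact_mod_cast (Nat.geomSum_lt hK (by simp)).le
  calc (G.distBoundary r S).encard ≤ (⋃ b ∈ G.boundary S, {x | G.dist b x < r}).encard :=
        encard_le_encard (hconn.distBoundary_subset_biUnion r S)
    _ ≤ (G.boundary S).ncard * K ^ r := encard_biUnion_le_ncard_mul hbdry fun b _ => hball b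

theorem Connected.ncard_distBoundary_le (hconn : G.Connected) {K : ℕ} (hK : 0 < K)
    (hdeg : ∀ v, (G.neighborSet v).encard ≤ K) {S : Set V} (hS : S.Finite) (r : ℕ) :
    (G.distBoundary r S).ncard ≤ K ^ r * (G.boundary S).ncard := by
  have hbdry : (G.boundary S).Finite := hS.subset (sep_subset _ _)
  -- For `K = 1` the balls `{x | G.dist b x < r}` may have two points, so the covering
  -- argument loses a factor; instead any two distinct vertices of `G` are adjacent.
  rcases (Nat.one_le_iff_ne_zero.mpr hK.ne').eq_or_lt with rfl | hK2
  · calc (G.distBoundary r S).ncard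
        ≤ (G.boundary S).ncard :=
          ncard_le_ncard (hconn.distBoundary_subset_boundary (by simpa using hdeg) r S) hbdry
      _ = 1 ^ r * (G.boundary S).ncard := by simp
  · rw [mul_comm]
    exact (encard_le_coe_iff_finite_ncard_le.mp
      (by exact_mod_cast hconn.encard_distBoundary_le hK2 hdeg hbdry r)).2

end SimpleGraph

/-- Let `G` be a connected graph with all vertex degrees bounded by `K`, viewed
as a metric space via the path metric on vertices. For every finite vertex set
`S` and every `r > 0`, the `r`-boundary `∂_r S = {x ∈ S : ∃ y ∉ S, d(x,y) < r}`
satisfies `#∂_r S ≤ K^r · #∂S`, where `∂S` is the set of vertices of `S`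
adjacent to a vertex outside `S`. Consequently `G` is amenable as a metric
space iff it is Følner as a graph. -/
theorem bounded_degree_graph_amenable_iff_folner
    {V : Type*} (G : SimpleGraph V) (hconn : G.Connected)
    (K : ℕ) (hK : 0 < K)
    (hdeg : ∀ v : V, (G.neighborSet v).encard ≤ (K : ℕ∞)) :
    (∀ S : Set V, S.Finite → ∀ r : ℕ, 0 < r →
      {x ∈ S | ∃ y ∉ S, G.dist x y < r}.ncard ≤
        K ^ r * {x ∈ S | ∃ y ∉ S, G.Adj x y}.ncard) ∧
    ((∃ S : ℕ → Set V, (∀ n, (S n).Finite) ∧ (∀ n, (S n).Nonempty) ∧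
        ∀ r : ℕ, 0 < r → Tendsto
          (fun n => (({x ∈ S n | ∃ y ∉ S n, G.dist x y < r}).ncard : ℝ) /
            ((S n).ncard : ℝ)) atTop (𝓝 0)) ↔
     (∃ S : ℕ → Set V, (∀ n, (S n).Finite) ∧ (∀ n, (S n).Nonempty) ∧
        Tendsto
          (fun n => (({x ∈ S n | ∃ y ∉ S n, G.Adj x y}).ncard : ℝ) /
            ((S n).ncard : ℝ)) atTop (𝓝 0))) := by
  have hbound (S : Set V) (hS : S.Finite) (r : ℕ) :=
    hconn.ncard_distBoundary_le hK hdeg hS r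
  refine ⟨fun S hS r _ => hbound S hS r, ?_, ?_⟩
  · rintro ⟨S, hfin, hne, hamen⟩
    refine ⟨S, hfin, hne, tendsto_ncard_div_of_ncard_le_mul (B := fun n => G.distBoundary 2 (S n))
      1 (fun n => ?_) (hamen 2 two_pos)⟩
    rw [one_mul]
    exact ncard_le_ncard (G.boundary_subset_distBoundary_two (S n))
      ((hfin n).subset (sep_subset _ _))
  · rintro ⟨S, hfin, hne, hfol⟩
    exact ⟨S, hfin, hne, fun r _ =>
      tendsto_ncard_div_of_ncard_le_mul (K ^ r) (fun n => hbound (S n) (hfin n) r) hfol⟩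
end

section
/- Let 𝓗 be the pseudogroup on ℝ generated by the action of ℤ by integer translations, and let 𝓖 be the restriction of 𝓗 to a bounded open interval U of length > 1. Then for any choice of finite symmetric generating sets of 𝓗 and 𝓖, every 𝓗-orbit has infinite diameter in its word metric while every 𝓖-orbit has finite diameter in its word metric; hence the orbits are not coarsely quasi-isometric, even though 𝓗 and 𝓖 are equivalent pseudogroups (the inclusion U ↪ ℝ generates an equivalence). -/
/-!
Every `𝓗`-orbit contains `x + ℤ`, hence is infinite, while `d_E`-balls are finite: a point at
distance at most `K` from `x` is the image of `x` under one of the finitely many composites of at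
most `K` generators, and a point at distance at most `K` to `y` is the preimage of `y` under one of
them. A `𝓖`-orbit is a bounded subset of `x + ℤ`, hence finite, so its diameter is finite. A coarse
quasi-isometry would then give a finite net of the infinite `𝓗`-orbit, and finitely many finite
balls cannot cover it.
-/
open Topology Filter Set

/-- Translation by the integer `n` as a (partial) homeomorphism of `ℝ`. -/
noncomputable def intTranslation (n : ℤ) : OpenPartialHomeomorph ℝ ℝ :=
  (Homeomorph.addRight (n : ℝ)).toOpenPartialHomeomorph

section WordMetric

variable {Z : Type*} [TopologicalSpace Z]

def composeList (l : List (OpenPartialHomeomorph Z Z)) : OpenPartialHomeomorph Z Z :=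
  l.foldl OpenPartialHomeomorph.trans (OpenPartialHomeomorph.refl Z)

def boundedWords (E : Set (OpenPartialHomeomorph Z Z)) (K : ℕ) :
    Set (List (OpenPartialHomeomorph Z Z)) :=
  {l | (∀ g ∈ l, g ∈ E) ∧ l.length ≤ K}

lemma Set.Finite.boundedWords {E : Set (OpenPartialHomeomorph Z Z)} (hE : E.Finite) (K : ℕ) :
    (boundedWords E K).Finite := by
  have := hE.to_subtype
  refine ((List.finite_length_le E K).image (List.map Subtype.val)).subset ?_
  rintro l ⟨hlE, hlen⟩
  lift l to List E using hlE
  exact ⟨l, by simpa using hlen, rfl⟩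

variable {H E : Set (OpenPartialHomeomorph Z Z)}

lemma exists_mem_boundedWords_of_dE_le {x y : Z} {K : ℕ} (hle : dE H E x y ≤ K) :
    ∃ l ∈ boundedWords E K, x ∈ (composeList l).source ∧ composeList l x = y := by
  have hlt : dE H E x y < (K + 1 : ℕ) := hle.trans_lt (by exact_mod_cast K.lt_succ_self)
  obtain ⟨_, ⟨h, -, hx, rfl, rfl⟩, hh⟩ := sInf_lt_iff.mp hlt
  unfold wordLen at hh
  split_ifs at hh with hid
  · exact ⟨[], ⟨by simp, by simp⟩, by simp [composeList], hid.self_of_nhds.symm⟩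
  · obtain ⟨_, ⟨l, -, hlE, rfl, hxl, hl⟩, hlen⟩ := sInf_lt_iff.mp hh
    exact ⟨l, ⟨hlE, Nat.lt_succ_iff.mp (by exact_mod_cast hlen)⟩, hxl, hl.self_of_nhds⟩

lemma finite_setOf_dE_le (hE : E.Finite) (x : Z) (K : ℕ) :
    {y | dE H E x y ≤ K}.Finite :=
  ((hE.boundedWords K).image fun l => composeList l x).subset fun y hy => by
    obtain ⟨l, hl, -, rfl⟩ := exists_mem_boundedWords_of_dE_le hy
    exact ⟨l, hl, rfl⟩

lemma finite_setOf_dE_le_left (hE : E.Finite) (y : Z) (K : ℕ) :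
    {x | dE H E x y ≤ K}.Finite :=
  ((hE.boundedWords K).image fun l => (composeList l).symm y).subset fun x hx => by
    obtain ⟨l, hl, hxl, rfl⟩ := exists_mem_boundedWords_of_dE_le hx
    exact ⟨l, hl, (composeList l).left_inv hxl⟩

lemma dE_ne_top_of_mem_pgOrbit (hgen : ∀ h ∈ H, ∀ x ∈ h.source, wordLen E h x ≠ ⊤) {x y : Z}
    (hy : y ∈ pgOrbit H x) : dE H E x y ≠ ⊤ := by
  obtain ⟨h, hh, hx, rfl⟩ := hy
  exact ne_top_of_le_ne_top (hgen h hh x hx) (sInf_le ⟨h, hh, hx, rfl, rfl⟩)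

lemma IsPseudogroup.mem_pgOrbit_of_mem_pgOrbit (hH : IsPseudogroup H) {x y z : Z}
    (hy : y ∈ pgOrbit H x) (hz : z ∈ pgOrbit H x) : z ∈ pgOrbit H y := by
  obtain ⟨h, hh, hx, rfl⟩ := hy
  obtain ⟨g, hg, hxg, rfl⟩ := hz
  refine ⟨h.symm.trans g, hH.trans_mem _ (hH.symm_mem h hh) g hg, ?_, ?_⟩
  · simp [h.map_source hx, h.left_inv hx, hxg]
  · simp [h.left_inv hx]

lemma not_exists_dE_le_of_pgOrbit_infinite (hE : E.Finite) {x : Z}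
    (hinf : (pgOrbit H x).Infinite) : ¬ ∃ D : ℕ, ∀ y ∈ pgOrbit H x, dE H E x y ≤ D :=
  fun ⟨D, hD⟩ => hinf ((finite_setOf_dE_le hE x D).subset hD)

lemma exists_dE_le_of_pgOrbit_finite (hgen : ∀ h ∈ H, ∀ x ∈ h.source, wordLen E h x ≠ ⊤)
    {x : Z} (hfin : (pgOrbit H x).Finite) : ∃ D : ℕ, ∀ y ∈ pgOrbit H x, dE H E x y ≤ D := by
  obtain ⟨D, hD⟩ := (hfin.image fun y => (dE H E x y).toNat).bddAbove
  refine ⟨D, fun y hy => ?_⟩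
  rw [← ENat.natCast_toNat (dE_ne_top_of_mem_pgOrbit hgen hy)]
  exact_mod_cast hD (mem_image_of_mem _ hy)

lemma IsPseudogroup.not_forall_exists_dE_lt_of_pgOrbit_infinite (hH : IsPseudogroup H)
    (hE : E.Finite) (hgen : ∀ h ∈ H, ∀ x ∈ h.source, wordLen E h x ≠ ⊤) {x : Z}
    (hinf : (pgOrbit H x).Infinite) {A : Set Z} (hA : A.Finite) (hAx : A ⊆ pgOrbit H x)
    (C : ℝ) : ¬ ∀ y ∈ pgOrbit H x, ∃ p ∈ A, ((dE H E y p).toNat : ℝ) < C := by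
  intro hnet
  have hcover : pgOrbit H x ⊆ ⋃ p ∈ A, {y | dE H E y p ≤ ⌈C⌉₊} := by
    intro y hy
    obtain ⟨p, hpA, hp⟩ := hnet y hy
    refine mem_biUnion hpA ?_
    -- `toNat ⊤ = 0`, so `hp` says nothing until `dE H E y p` is known to be finite
    rw [mem_ofPred_eq, ← ENat.natCast_toNat
      (dE_ne_top_of_mem_pgOrbit hgen (hH.mem_pgOrbit_of_mem_pgOrbit hy (hAx hpA)))]
    exact_mod_cast (Nat.lt_ceil.mpr hp).le
  exact hinf ((hA.biUnion fun p _ => finite_setOf_dE_le_left hE p ⌈C⌉₊).subset hcover)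

end WordMetric

section IntegerTranslations

variable {H : Set (OpenPartialHomeomorph ℝ ℝ)}

lemma add_int_mem_pgOrbit (htrans : ∀ n : ℤ, intTranslation n ∈ H) (x : ℝ) (n : ℤ) :
    x + n ∈ pgOrbit H x :=
  ⟨intTranslation n, htrans n, by simp [intTranslation], rfl⟩

lemma pgOrbit_infinite_of_intTranslation_mem (htrans : ∀ n : ℤ, intTranslation n ∈ H)
    (x : ℝ) : (pgOrbit H x).Infinite :=
  infinite_of_injective_forall_mem (fun _ _ h => by simpa using h) (add_int_mem_pgOrbit htrans x)

lemma exists_add_int_mem_Ioo {a b : ℝ} (hab : 1 < b - a) (x : ℝ) :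
    ∃ n : ℤ, x + n ∈ Ioo a b := by
  refine ⟨⌊a - x⌋ + 1, ?_, ?_⟩ <;> push_cast
  · linarith [Int.lt_floor_add_one (a - x)]
  · linarith [Int.floor_le (a - x)]

lemma finite_setOf_add_int_mem_Ioo (x a b : ℝ) : {n : ℤ | x + n ∈ Ioo a b}.Finite :=
  (finite_Ioo ⌊a - x⌋ ⌈b - x⌉).subset fun n ⟨ha, hb⟩ =>
    ⟨Int.floor_lt.mpr (by linarith), Int.lt_ceil.mpr (by linarith)⟩

lemma pgOrbit_finite_of_target_subset_Ioo
    (hloc : ∀ h ∈ H, ∀ x ∈ h.source, ∃ n : ℤ, ∀ᶠ y in 𝓝 x, h y = y + (n : ℝ))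
    {G : Set (OpenPartialHomeomorph ℝ ℝ)} (hGH : G ⊆ H) {a b : ℝ}
    (hGt : ∀ h ∈ G, h.target ⊆ Ioo a b) (x : ℝ) : (pgOrbit G x).Finite := by
  refine ((finite_setOf_add_int_mem_Ioo x a b).image fun n : ℤ => x + n).subset ?_
  rintro _ ⟨h, hh, hx, rfl⟩
  obtain ⟨n, hn⟩ := hloc h (hGH hh) x hx
  have hxn : h x = x + n := hn.self_of_nhds
  exact ⟨n, show x + n ∈ Ioo a b from hxn ▸ hGt h hh (h.map_source hx), hxn.symm⟩

end IntegerTranslations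

theorem integer_translations_restricted_orbits_not_coarsely_quasi_isometric_general
    (H : Set (OpenPartialHomeomorph ℝ ℝ)) (hH : IsPseudogroup H)
    (htrans : ∀ n : ℤ, intTranslation n ∈ H)
    (hloc : ∀ h ∈ H, ∀ x ∈ h.source, ∃ n : ℤ, ∀ᶠ y in 𝓝 x, h y = y + (n : ℝ))
    (a b : ℝ) (hab : 1 < b - a)
    (G : Set (OpenPartialHomeomorph ℝ ℝ))
    (hG : G = {h ∈ H | h.source ⊆ Set.Ioo a b ∧ h.target ⊆ Set.Ioo a b})
    (E : Set (OpenPartialHomeomorph ℝ ℝ)) (hEfin : E.Finite)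
    (hEgen : ∀ h ∈ H, ∀ x ∈ h.source, wordLen E h x ≠ ⊤)
    (E' : Set (OpenPartialHomeomorph ℝ ℝ))
    (hE'gen : ∀ h ∈ G, ∀ x ∈ h.source, wordLen E' h x ≠ ⊤) :
    -- `U` meets every `𝓗`-orbit, so the inclusion generates an equivalence
    (∀ x : ℝ, ∃ y ∈ Set.Ioo a b, y ∈ pgOrbit H x) ∧
    -- every `𝓗`-orbit has infinite `d_E`-diameter
    (∀ x : ℝ, ¬ ∃ D : ℕ, ∀ y ∈ pgOrbit H x, dE H E x y ≤ (D : ℕ∞)) ∧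
    -- every `𝓖`-orbit has finite `d_{E'}`-diameter
    (∀ x ∈ Set.Ioo a b, ∃ D : ℕ, ∀ y ∈ pgOrbit G x, dE G E' x y ≤ (D : ℕ∞)) ∧
    -- hence the orbits are not coarsely quasi-isometric
    (∀ x : ℝ, ∀ x' ∈ Set.Ioo a b,
      ¬ ∃ (A A' : Set ℝ) (f : ℝ → ℝ) (C L : ℝ), 0 < C ∧ 0 < L ∧
        A ⊆ pgOrbit H x ∧ A' ⊆ pgOrbit G x' ∧
        (∀ y ∈ pgOrbit H x, ∃ p ∈ A, ((dE H E y p).toNat : ℝ) < C) ∧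
        (∀ y ∈ pgOrbit G x', ∃ p ∈ A', ((dE G E' y p).toNat : ℝ) < C) ∧
        Set.BijOn f A A' ∧
        (∀ p ∈ A, ∀ q ∈ A,
          ((dE G E' (f p) (f q)).toNat : ℝ) ≤ L * ((dE H E p q).toNat : ℝ) ∧
          ((dE H E p q).toNat : ℝ) ≤ L * ((dE G E' (f p) (f q)).toNat : ℝ))) := by
  have hHinf := pgOrbit_infinite_of_intTranslation_mem htrans
  have hGfin := pgOrbit_finite_of_target_subset_Ioo hloc (G := G) (a := a) (b := b)
    (by rw [hG]; exact sep_subset _ _) (by rw [hG]; exact fun h hh => hh.2.2)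
  refine ⟨fun x => ?_, fun x => not_exists_dE_le_of_pgOrbit_infinite hEfin (hHinf x),
    fun x _ => exists_dE_le_of_pgOrbit_finite hE'gen (hGfin x), ?_⟩
  · obtain ⟨n, hn⟩ := exists_add_int_mem_Ioo hab x
    exact ⟨_, hn, add_int_mem_pgOrbit htrans x n⟩
  · rintro x x' - ⟨A, A', f, C, L, -, -, hA, hA', hnet, -, hbij, -⟩
    have hAfin : A.Finite := hbij.finite_iff_finite.mpr ((hGfin x').subset hA')
    exact hH.not_forall_exists_dE_lt_of_pgOrbit_infinite hEfin hEgen (hHinf x) hAfin hA C hnet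

/-- Let `𝓗` be the pseudogroup on `ℝ` generated by the action of `ℤ` by
translations, and let `𝓖` be its restriction to a bounded open interval
`U = (a,b)` of length `> 1` (so `U` meets every `𝓗`-orbit, and the inclusion
`U ↪ ℝ` generates an equivalence `𝓖 → 𝓗`). Then, for any choice of finite
symmetric generating sets `E` of `𝓗` and `E'` of `𝓖`, every `𝓗`-orbit has
infinite diameter for `d_E` while every `𝓖`-orbit has finite diameter for
`d_{E'}`; hence corresponding orbits are not coarsely quasi-isometric. -/
theorem integer_translations_restricted_orbits_not_coarsely_quasi_isometric
    (H : Set (OpenPartialHomeomorph ℝ ℝ)) (hH : IsPseudogroup H)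
    (htrans : ∀ n : ℤ, intTranslation n ∈ H)
    (hloc : ∀ h ∈ H, ∀ x ∈ h.source, ∃ n : ℤ, ∀ᶠ y in 𝓝 x, h y = y + (n : ℝ))
    (a b : ℝ) (hab : 1 < b - a)
    (G : Set (OpenPartialHomeomorph ℝ ℝ))
    (hG : G = {h ∈ H | h.source ⊆ Set.Ioo a b ∧ h.target ⊆ Set.Ioo a b})
    (E : Set (OpenPartialHomeomorph ℝ ℝ)) (hEH : E ⊆ H) (hEfin : E.Finite)
    (hEsymm : ∀ g ∈ E, g.symm ∈ E)
    (hEgen : ∀ h ∈ H, ∀ x ∈ h.source, wordLen E h x ≠ ⊤)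
    (E' : Set (OpenPartialHomeomorph ℝ ℝ)) (hE'G : E' ⊆ G) (hE'fin : E'.Finite)
    (hE'symm : ∀ g ∈ E', g.symm ∈ E')
    (hE'gen : ∀ h ∈ G, ∀ x ∈ h.source, wordLen E' h x ≠ ⊤) :
    -- `U` meets every `𝓗`-orbit, so the inclusion generates an equivalence
    (∀ x : ℝ, ∃ y ∈ Set.Ioo a b, y ∈ pgOrbit H x) ∧
    -- every `𝓗`-orbit has infinite `d_E`-diameter
    (∀ x : ℝ, ¬ ∃ D : ℕ, ∀ y ∈ pgOrbit H x, dE H E x y ≤ (D : ℕ∞)) ∧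
    -- every `𝓖`-orbit has finite `d_{E'}`-diameter
    (∀ x ∈ Set.Ioo a b, ∃ D : ℕ, ∀ y ∈ pgOrbit G x, dE G E' x y ≤ (D : ℕ∞)) ∧
    -- hence the orbits are not coarsely quasi-isometric
    (∀ x : ℝ, ∀ x' ∈ Set.Ioo a b,
      ¬ ∃ (A A' : Set ℝ) (f : ℝ → ℝ) (C L : ℝ), 0 < C ∧ 0 < L ∧
        A ⊆ pgOrbit H x ∧ A' ⊆ pgOrbit G x' ∧
        (∀ y ∈ pgOrbit H x, ∃ p ∈ A, ((dE H E y p).toNat : ℝ) < C) ∧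
        (∀ y ∈ pgOrbit G x', ∃ p ∈ A', ((dE G E' y p).toNat : ℝ) < C) ∧
        Set.BijOn f A A' ∧
        (∀ p ∈ A, ∀ q ∈ A,
          ((dE G E' (f p) (f q)).toNat : ℝ) ≤ L * ((dE H E p q).toNat : ℝ) ∧
          ((dE H E p q).toNat : ℝ) ≤ L * ((dE G E' (f p) (f q)).toNat : ℝ))) :=
  integer_translations_restricted_orbits_not_coarsely_quasi_isometric_general H hH htrans hloc a b
    hab G hG E hEfin hEgen E' hE'gen
end

section
/- A Hausdorff paracompact local metric space (Z, 𝔇) is induced by a global metric: there exists a metric D on Z with {(Z, D)} ∈ 𝔇, i.e., D is locally equal to the given local metric. -/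
/-!
Refine the chart domains to a locally finite open cover `w` whose closures stay inside the domains
(paracompactness, then the shrinking lemma in the normal space `Z`). Glue the charts into the
one-step cost `σ u v = min 1 (inf {d_p u v | u, v ∈ w p})` and let `D` be the largest pseudometric
below `σ`, the infimum of `σ`-lengths of chains; thus `D ≤ σ ≤ d_i` on each `w i`.

Conversely, at each `x` choose a chart `i` and a radius `η` so small that every `w p` meeting the
`η`-ball of `x` carries a chart coinciding with `i` on that ball; only finitely many `w p` come
near `x`, so such `η` exists. For `y` in the `η / 8`-ball, `z ↦ min (η / 4) (d_i y z)`, extended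
by `η / 4` off the `η`-ball, grows by at most `σ` along every step of a chain, hence bounds `D y`
from below. So `D = d_i` on the `η / 8`-ball of `x`: the `D`-balls and the chart balls around `x`
agree for small radii, which gives both the topology and the local equality.
-/

open Set Topology Filter TopologicalSpace
open scoped NNReal

section LocalMetric

variable {Z ι : Type*} {Zi : ι → Set Z} {di : ι → Z → Z → ℝ}

def chartBall (Zi : ι → Set Z) (di : ι → Z → Z → ℝ) (i : ι) (x : Z) (r : ℝ) : Set Z :=
  {y ∈ Zi i | di i x y < r}

theorem chartBall_subset (i : ι) (x : Z) (r : ℝ) : chartBall Zi di i x r ⊆ Zi i :=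
  fun _ hy => hy.1

theorem chartBall_mono (i : ι) (x : Z) {r s : ℝ} (hrs : r ≤ s) :
    chartBall Zi di i x r ⊆ chartBall Zi di i x s :=
  fun _ hy => ⟨hy.1, hy.2.trans_le hrs⟩

structure IsLocalMetricCover (Zi : ι → Set Z) (di : ι → Z → Z → ℝ) : Prop where
  iUnion_eq : ⋃ i, Zi i = univ
  symm : ∀ i, ∀ x ∈ Zi i, ∀ y ∈ Zi i, di i x y = di i y x
  eq_zero_iff : ∀ i, ∀ x ∈ Zi i, ∀ y ∈ Zi i, di i x y = 0 ↔ x = y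
  triangle : ∀ i, ∀ x ∈ Zi i, ∀ y ∈ Zi i, ∀ z ∈ Zi i, di i x z ≤ di i x y + di i y z
  exists_chartBall_subset : ∀ i j, ∀ x ∈ Zi i ∩ Zi j, ∃ r > (0 : ℝ), chartBall Zi di i x r ⊆ Zi j
  locallyEq : ∀ i j, ∀ x ∈ Zi i ∩ Zi j, ∃ r > (0 : ℝ), ∀ y ∈ Zi i ∩ Zi j, ∀ z ∈ Zi i ∩ Zi j,
    di i x y < r → di i x z < r → di i y z = di j y z

namespace IsLocalMetricCover

theorem dist_self (hc : IsLocalMetricCover Zi di) {i : ι} {x : Z} (hx : x ∈ Zi i) :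
    di i x x = 0 :=
  (hc.eq_zero_iff i x hx x hx).2 rfl

theorem nonneg (hc : IsLocalMetricCover Zi di) {i : ι} {x y : Z} (hx : x ∈ Zi i)
    (hy : y ∈ Zi i) : 0 ≤ di i x y := by
  have := hc.triangle i x hx y hy x hx
  rw [hc.dist_self hx, hc.symm i y hy x hx] at this
  linarith

theorem mem_chartBall_self (hc : IsLocalMetricCover Zi di) {i : ι} {x : Z} (hx : x ∈ Zi i)
    {r : ℝ} (hr : 0 < r) : x ∈ chartBall Zi di i x r :=
  ⟨hx, by rwa [hc.dist_self hx]⟩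

theorem chartBall_subset_chartBall (hc : IsLocalMetricCover Zi di) {i : ι} {x y : Z} {r s : ℝ}
    (hx : x ∈ Zi i) (hy : y ∈ chartBall Zi di i x s) (hr : r ≤ s - di i x y) :
    chartBall Zi di i y r ⊆ chartBall Zi di i x s := by
  rintro z ⟨hz, hyz⟩
  have := hc.triangle i x hx y hy.1 z hz
  exact ⟨hz, by linarith⟩

theorem eventually_chartBall_subset (hc : IsLocalMetricCover Zi di) {i j : ι} {x : Z}
    (hi : x ∈ Zi i) (hj : x ∈ Zi j) :
    ∀ᶠ r in 𝓝[>] 0, chartBall Zi di i x r ⊆ chartBall Zi di j x r ∧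
      ∀ y ∈ chartBall Zi di i x r, ∀ z ∈ chartBall Zi di i x r, di i y z = di j y z := by
  obtain ⟨r₁, hr₁, hsub⟩ := hc.exists_chartBall_subset i j x ⟨hi, hj⟩
  obtain ⟨r₂, hr₂, heq⟩ := hc.locallyEq i j x ⟨hi, hj⟩
  have hmem {r : ℝ} (hr : r < min r₁ r₂) {y : Z} (hy : y ∈ chartBall Zi di i x r) :
      y ∈ Zi i ∩ Zi j ∧ di i x y < r₂ :=
    ⟨⟨hy.1, hsub ⟨hy.1, hy.2.trans (hr.trans_le (min_le_left _ _))⟩⟩,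
      hy.2.trans (hr.trans_le (min_le_right _ _))⟩
  filter_upwards [Ioo_mem_nhdsGT (lt_min hr₁ hr₂)] with r ⟨hr₀, hr⟩
  have hxx : di i x x < r₂ := by rwa [hc.dist_self hi]
  refine ⟨fun y hy => ⟨(hmem hr hy).1.2, ?_⟩, fun y hy z hz => ?_⟩
  · rw [← heq x ⟨hi, hj⟩ y (hmem hr hy).1 hxx (hmem hr hy).2]
    exact hy.2
  · exact heq y (hmem hr hy).1 z (hmem hr hz).1 (hmem hr hy).2 (hmem hr hz).2

theorem eventually_chartBall_eq (hc : IsLocalMetricCover Zi di) {i j : ι} {x : Z}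
    (hi : x ∈ Zi i) (hj : x ∈ Zi j) :
    ∀ᶠ r in 𝓝[>] 0, chartBall Zi di j x r = chartBall Zi di i x r ∧
      ∀ y ∈ chartBall Zi di i x r, ∀ z ∈ chartBall Zi di i x r, di j y z = di i y z := by
  filter_upwards [hc.eventually_chartBall_subset hi hj, hc.eventually_chartBall_subset hj hi]
    with r ⟨hij, heq⟩ ⟨hji, _⟩
  exact ⟨hji.antisymm hij, fun y hy z hz => (heq y hy z hz).symm⟩

end IsLocalMetricCover

def chartBalls (Zi : ι → Set Z) (di : ι → Z → Z → ℝ) : Set (Set Z) :=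
  {B | ∃ i, ∃ x ∈ Zi i, ∃ r : ℝ, B = chartBall Zi di i x r}

section ChartTopology

variable [t : TopologicalSpace Z]

theorem isOpen_chartBall (ht : t = generateFrom (chartBalls Zi di)) {i : ι} {x : Z}
    (hx : x ∈ Zi i) (r : ℝ) : IsOpen (chartBall Zi di i x r) :=
  ht ▸ isOpen_generateFrom_of_mem ⟨i, x, hx, r, rfl⟩

theorem isOpen_chartDomain (ht : t = generateFrom (chartBalls Zi di))
    (hc : IsLocalMetricCover Zi di) (i : ι) : IsOpen (Zi i) := by
  have : Zi i = ⋃ x ∈ Zi i, chartBall Zi di i x 1 :=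
    (Subset.antisymm (fun x hx => mem_biUnion hx (hc.mem_chartBall_self hx one_pos))
      (iUnion₂_subset fun x _ => chartBall_subset i x 1))
  rw [this]
  exact isOpen_biUnion fun x hx => isOpen_chartBall ht hx 1

theorem eventually_chartBall_subset_of_isOpen (ht : t = generateFrom (chartBalls Zi di))
    (hc : IsLocalMetricCover Zi di) {U : Set Z} (hU : IsOpen U) {x : Z} (hx : x ∈ U) {i : ι}
    (hi : x ∈ Zi i) : ∀ᶠ r in 𝓝[>] 0, chartBall Zi di i x r ⊆ U := by
  subst ht
  induction hU generalizing x with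
  | basic B hB =>
    obtain ⟨k, y, hy, s, rfl⟩ := hB
    filter_upwards [hc.eventually_chartBall_subset hi hx.1, Ioo_mem_nhdsGT (sub_pos.2 hx.2)]
      with r ⟨hik, _⟩ ⟨_, hr⟩
    exact hik.trans (hc.chartBall_subset_chartBall hy hx hr.le)
  | univ => exact univ_mem' fun _ => subset_univ _
  | inter V W _ _ ihV ihW =>
    filter_upwards [ihV hx.1 hi, ihW hx.2 hi] with r hV hW using subset_inter hV hW
  | sUnion S _ ih =>
    obtain ⟨V, hV, hxV⟩ := hx
    filter_upwards [ih V hV hxV hi] with r h using h.trans (subset_sUnion_of_mem hV)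

theorem hasBasis_nhds_chartBall (ht : t = generateFrom (chartBalls Zi di))
    (hc : IsLocalMetricCover Zi di) {i : ι} {x : Z} (hi : x ∈ Zi i) :
    (𝓝 x).HasBasis (fun r : ℝ => 0 < r) (chartBall Zi di i x) := by
  refine ⟨fun U => ⟨fun hU => ?_, fun ⟨r, hr, hsub⟩ =>
    mem_of_superset ((isOpen_chartBall ht hi r).mem_nhds (hc.mem_chartBall_self hi hr)) hsub⟩⟩
  obtain ⟨V, hVU, hV, hxV⟩ := mem_nhds_iff.1 hU
  obtain ⟨r, hsub, hr⟩ :=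
    ((eventually_chartBall_subset_of_isOpen ht hc hV hxV hi).and self_mem_nhdsWithin).exists
  exact ⟨r, hr, hsub.trans hVU⟩

end ChartTopology

theorem exists_isOpen_cover_locallyFinite_closure_subset {X : Type*} [TopologicalSpace X]
    [ParacompactSpace X] [T2Space X] {u : ι → Set X} (hu : ∀ i, IsOpen (u i))
    (hcover : ⋃ i, u i = univ) :
    ∃ w : ι → Set X, (∀ i, IsOpen (w i)) ∧ ⋃ i, w i = univ ∧
      LocallyFinite (fun i => closure (w i)) ∧ ∀ i, closure (w i) ⊆ u i := by
  obtain ⟨v, hvo, hvc, hvf, hvu⟩ := precise_refinement u hu hcover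
  obtain ⟨w, hwc, hwo, hwv⟩ := exists_iUnion_eq_closure_subset hvo hvf.point_finite hvc
  exact ⟨w, hwo, hwc, hvf.subset hwv, fun i => (hwv i).trans (hvu i)⟩

theorem PseudoMetricSpace.sub_le_dist_ofPreNNDist {X : Type*} (d : X → X → ℝ≥0)
    (dist_self : ∀ x, d x x = 0) (dist_comm : ∀ x y, d x y = d y x) {g : X → ℝ}
    (hg : ∀ u v, g v - g u ≤ d u v) (x y : X) :
    g y - g x ≤
      @dist X (@PseudoMetricSpace.toDist X (ofPreNNDist d dist_self dist_comm)) x y := by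
  rw [dist_ofPreNNDist, NNReal.coe_iInf]
  refine le_ciInf fun l => ?_
  induction l generalizing x with
  | nil => simpa using hg x y
  | cons a l ih =>
    have hstep := hg x a
    have hrest := ih a
    simp only [List.cons_append, List.zipWith_cons_cons, List.sum_cons, NNReal.coe_add] at hrest ⊢
    linarith

section Gluing

variable {X : Type*} (w : ι → Set X) (d : ι → X → X → ℝ)

-- Including `1` keeps the infimum off the empty set, where `sInf ∅ = 0` in `ℝ≥0`.
noncomputable def gluedDist (u v : X) : ℝ≥0 :=
  sInf (insert 1 {c | ∃ p, u ∈ w p ∧ v ∈ w p ∧ (c : ℝ) = d p u v})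

variable {w d}

theorem gluedDist_le {p : ι} {u v : X} (hu : u ∈ w p) (hv : v ∈ w p) (h₀ : 0 ≤ d p u v) :
    (gluedDist w d u v : ℝ) ≤ d p u v := by
  have : gluedDist w d u v ≤ (d p u v).toNNReal :=
    csInf_le (OrderBot.bddBelow _) (mem_insert_of_mem _ ⟨p, hu, hv, Real.coe_toNNReal _ h₀⟩)
  simpa [Real.coe_toNNReal _ h₀] using NNReal.coe_le_coe.2 this

theorem le_gluedDist {u v : X} {b : ℝ} (hb : b ≤ 1)
    (h : ∀ p, u ∈ w p → v ∈ w p → b ≤ d p u v) : b ≤ gluedDist w d u v := by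
  rcases le_or_gt b 0 with hb₀ | hb₀
  · exact hb₀.trans (NNReal.coe_nonneg _)
  lift b to ℝ≥0 using hb₀.le
  refine NNReal.coe_le_coe.2 (le_csInf (insert_nonempty _ _) ?_)
  rintro c (rfl | ⟨p, hu, hv, hc⟩)
  · exact_mod_cast hb
  · exact NNReal.coe_le_coe.1 (hc ▸ h p hu hv)

theorem gluedDist_comm (hsymm : ∀ p, ∀ u ∈ w p, ∀ v ∈ w p, d p u v = d p v u) (u v : X) :
    gluedDist w d u v = gluedDist w d v u := by
  have (u v : X) : {c : ℝ≥0 | ∃ p, u ∈ w p ∧ v ∈ w p ∧ (c : ℝ) = d p u v} ⊆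
      {c | ∃ p, v ∈ w p ∧ u ∈ w p ∧ (c : ℝ) = d p v u} :=
    fun _ ⟨p, hu, hv, hc⟩ => ⟨p, hv, hu, hc.trans (hsymm p u hu v hv)⟩
  rw [gluedDist, gluedDist, (this u v).antisymm (this v u)]

theorem gluedDist_self (hcover : ⋃ p, w p = univ) (hzero : ∀ p, ∀ u ∈ w p, d p u u = 0)
    (u : X) : gluedDist w d u u = 0 := by
  obtain ⟨p, hp⟩ := mem_iUnion.1 (hcover ▸ mem_univ u)
  refine nonpos_iff_eq_zero.1 (csInf_le (OrderBot.bddBelow _) (mem_insert_of_mem _ ?_))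
  exact ⟨p, hp, hp, by simp [hzero p u hp]⟩

structure IsGluedMetric [PseudoMetricSpace X] (w : ι → Set X) (d : ι → X → X → ℝ) : Prop where
  dist_le : ∀ u v, dist u v ≤ gluedDist w d u v
  sub_le_dist : ∀ g : X → ℝ, (∀ u v, g v - g u ≤ gluedDist w d u v) → ∀ u v, g v - g u ≤ dist u v

end Gluing

structure IsAdaptedChart (Zi : ι → Set Z) (di : ι → Z → Z → ℝ) (w : ι → Set Z) (i : ι) (x : Z)
    (η : ℝ) : Prop where
  pos : 0 < η
  le_one : η ≤ 1
  mem : x ∈ Zi i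
  chartBall_subset : chartBall Zi di i x η ⊆ w i
  chartBall_eq : ∀ p, (w p ∩ chartBall Zi di i x η).Nonempty →
    chartBall Zi di p x η = chartBall Zi di i x η
  chartDist_eq : ∀ p, (w p ∩ chartBall Zi di i x η).Nonempty →
    ∀ y ∈ chartBall Zi di i x η, ∀ z ∈ chartBall Zi di i x η, di p y z = di i y z

theorem exists_isAdaptedChart {t : TopologicalSpace Z} (ht : t = generateFrom (chartBalls Zi di))
    (hc : IsLocalMetricCover Zi di) {w : ι → Set Z} (hwo : ∀ p, IsOpen (w p))
    (hwc : ⋃ p, w p = univ) (hwf : LocallyFinite fun p => closure (w p))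
    (hwZ : ∀ p, closure (w p) ⊆ Zi p) (x : Z) : ∃ i η, IsAdaptedChart Zi di w i x η := by
  obtain ⟨i, hxi⟩ := mem_iUnion.1 (hwc ▸ mem_univ x)
  have hxZ : x ∈ Zi i := hwZ i (subset_closure hxi)
  have hN : w i ∩ ⋂ (p) (_ : x ∉ closure (w p)), (closure (w p))ᶜ ∈ 𝓝 x :=
    inter_mem ((hwo i).mem_nhds hxi) (hwf.iInter_compl_mem_nhds (fun _ => isClosed_closure) x)
  obtain ⟨r₀, hr₀, hsub⟩ := (hasBasis_nhds_chartBall ht hc hxZ).mem_iff.1 hN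
  have hJ : ∀ᶠ η in 𝓝[>] 0, ∀ p ∈ {p | x ∈ closure (w p)},
      chartBall Zi di p x η = chartBall Zi di i x η ∧
        ∀ y ∈ chartBall Zi di i x η, ∀ z ∈ chartBall Zi di i x η, di p y z = di i y z :=
    (eventually_all_finite (hwf.point_finite x)).2 fun p hp =>
      hc.eventually_chartBall_eq hxZ (hwZ p hp)
  obtain ⟨η, ⟨hJη, -, hη⟩, hη₀⟩ :=
    ((hJ.and (Ioo_mem_nhdsGT (lt_min hr₀ one_pos))).and self_mem_nhdsWithin).exists
  have hball := (chartBall_mono i x (hη.le.trans (min_le_left _ _))).trans hsub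
  have hJ_of_nonempty (p : ι) (hp : (w p ∩ chartBall Zi di i x η).Nonempty) :
      x ∈ closure (w p) := by
    obtain ⟨u, hup, hu⟩ := hp
    by_contra hx
    exact mem_iInter₂.1 (hball hu).2 p hx (subset_closure hup)
  exact ⟨i, η, hη₀, hη.le.trans (min_le_right _ _), hxZ, fun u hu => (hball hu).1,
    fun p hp => (hJη p (hJ_of_nonempty p hp)).1, fun p hp => (hJη p (hJ_of_nonempty p hp)).2⟩

open scoped Classical in
noncomputable def cutoffDist (Zi : ι → Set Z) (di : ι → Z → Z → ℝ) (i : ι) (x : Z) (η : ℝ)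
    (y z : Z) : ℝ :=
  if z ∈ chartBall Zi di i x η then min (η / 4) (di i y z) else η / 4

theorem cutoffDist_le_quarter (i : ι) (x : Z) (η : ℝ) (y z : Z) :
    cutoffDist Zi di i x η y z ≤ η / 4 := by
  unfold cutoffDist
  split_ifs
  exacts [min_le_left _ _, le_rfl]

theorem mem_chartBall_of_cutoffDist_lt {i : ι} {x y u : Z} {η : ℝ}
    (h : cutoffDist Zi di i x η y u < η / 4) :
    u ∈ chartBall Zi di i x η ∧ cutoffDist Zi di i x η y u = di i y u := by
  unfold cutoffDist at h ⊢
  by_cases hu : u ∈ chartBall Zi di i x η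
  · rw [if_pos hu] at h ⊢
    exact ⟨hu, min_eq_right ((min_lt_iff.1 h).resolve_left (lt_irrefl _)).le⟩
  · rw [if_neg hu] at h
    exact absurd h (lt_irrefl _)

namespace IsAdaptedChart

variable {w : ι → Set Z} {i : ι} {x y : Z} {η : ℝ}

theorem cutoffDist_nonneg (hc : IsLocalMetricCover Zi di) (hA : IsAdaptedChart Zi di w i x η)
    (hy : y ∈ Zi i) (z : Z) : 0 ≤ cutoffDist Zi di i x η y z := by
  have := hA.pos
  unfold cutoffDist
  split_ifs with hz
  exacts [le_min (by linarith) (hc.nonneg hy hz.1), by linarith]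

theorem cutoffDist_sub_le (hc : IsLocalMetricCover Zi di) (hwZ : ∀ p, w p ⊆ Zi p)
    (hA : IsAdaptedChart Zi di w i x η) (hy : y ∈ chartBall Zi di i x (η / 8)) {p : ι} {u v : Z}
    (hu : u ∈ w p) (hv : v ∈ w p) :
    cutoffDist Zi di i x η y v - cutoffDist Zi di i x η y u ≤ di p u v := by
  rw [sub_le_iff_le_add']
  rcases le_or_gt (η / 4) (cutoffDist Zi di i x η y u + di p u v) with h | h
  · exact (cutoffDist_le_quarter i x η y v).trans h
  obtain ⟨huB, hfu⟩ := mem_chartBall_of_cutoffDist_lt (show cutoffDist Zi di i x η y u < η / 4 by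
    linarith [hc.nonneg (hwZ p hu) (hwZ p hv)])
  rw [hfu] at h ⊢
  have hp : (w p ∩ chartBall Zi di i x η).Nonempty := ⟨u, hu, huB⟩
  have hxB := hc.mem_chartBall_self hA.mem hA.pos
  have hxp : x ∈ Zi p := (hA.chartBall_eq p hp ▸ hxB).1
  have hvB : v ∈ chartBall Zi di i x η := by
    rw [← hA.chartBall_eq p hp]
    refine ⟨hwZ p hv, ?_⟩
    calc di p x v ≤ di p x u + di p u v := hc.triangle p x hxp u (hwZ p hu) v (hwZ p hv)
      _ = di i x u + di p u v := by rw [hA.chartDist_eq p hp x hxB u huB]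
      _ ≤ di i x y + di i y u + di p u v := by
        gcongr
        exact hc.triangle i x hA.mem y hy.1 u huB.1
      _ < η := by linarith [(hy.2 : di i x y < η / 8), hA.pos]
  calc cutoffDist Zi di i x η y v ≤ di i y v := by simp only [cutoffDist, if_pos hvB, min_le_right]
    _ ≤ di i y u + di i u v := hc.triangle i y hy.1 u huB.1 v hvB.1
    _ = di i y u + di p u v := by rw [hA.chartDist_eq p hp u huB v hvB]

section GluedMetric

variable [PseudoMetricSpace Z] {z : Z}

theorem cutoffDist_le_dist (hc : IsLocalMetricCover Zi di) (hwZ : ∀ p, w p ⊆ Zi p)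
    (hA : IsAdaptedChart Zi di w i x η) (hD : IsGluedMetric w di)
    (hy : y ∈ chartBall Zi di i x (η / 8)) (z : Z) : cutoffDist Zi di i x η y z ≤ dist y z := by
  have hyB : y ∈ chartBall Zi di i x η := chartBall_mono i x (by linarith [hA.pos]) hy
  have hfy : cutoffDist Zi di i x η y y = 0 := by
    rw [cutoffDist, if_pos hyB, hc.dist_self hy.1]
    exact min_eq_right (by linarith [hA.pos])
  have hstep (u v : Z) :
      cutoffDist Zi di i x η y v - cutoffDist Zi di i x η y u ≤ gluedDist w di u v := by
    refine le_gluedDist ?_ fun p hu hv => hA.cutoffDist_sub_le hc hwZ hy hu hv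
    linarith [cutoffDist_le_quarter (Zi := Zi) (di := di) i x η y v,
      hA.cutoffDist_nonneg hc hy.1 u, hA.le_one]
  simpa [hfy] using hD.sub_le_dist _ hstep y z

theorem dist_eq (hc : IsLocalMetricCover Zi di) (hwZ : ∀ p, w p ⊆ Zi p)
    (hA : IsAdaptedChart Zi di w i x η) (hD : IsGluedMetric w di)
    (hy : y ∈ chartBall Zi di i x (η / 8)) (hz : z ∈ chartBall Zi di i x (η / 8)) :
    dist y z = di i y z := by
  have hsub : chartBall Zi di i x (η / 8) ⊆ w i :=
    (chartBall_mono i x (by linarith [hA.pos])).trans hA.chartBall_subset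
  refine le_antisymm ((hD.dist_le y z).trans
    (gluedDist_le (hsub hy) (hsub hz) (hc.nonneg hy.1 hz.1))) ?_
  have hyz : di i y z < η / 4 := by
    have := hc.triangle i y hy.1 x hA.mem z hz.1
    rw [hc.symm i y hy.1 x hA.mem] at this
    linarith [(hy.2 : di i x y < η / 8), (hz.2 : di i x z < η / 8)]
  have hf := hA.cutoffDist_le_dist hc hwZ hD hy z
  rwa [cutoffDist, if_pos (chartBall_mono i x (by linarith [hA.pos]) hz),
    min_eq_right hyz.le] at hf

theorem ball_eq_chartBall (hc : IsLocalMetricCover Zi di) (hwZ : ∀ p, w p ⊆ Zi p)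
    (hA : IsAdaptedChart Zi di w i x η) (hD : IsGluedMetric w di)
    {r : ℝ} (hr : r ≤ η / 8) : Metric.ball x r = chartBall Zi di i x r := by
  ext z
  rw [Metric.mem_ball']
  have hxB := hc.mem_chartBall_self hA.mem (show 0 < η / 8 by linarith [hA.pos])
  constructor
  · intro hz
    have hf := hA.cutoffDist_le_dist hc hwZ hD hxB z
    obtain ⟨hzB, hfz⟩ := mem_chartBall_of_cutoffDist_lt (show cutoffDist Zi di i x η x z < η / 4 by
      linarith [hA.pos])
    exact ⟨hzB.1, (hfz ▸ hf).trans_lt hz⟩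
  · intro hz
    rw [hA.dist_eq hc hwZ hD hxB (chartBall_mono i x hr hz)]
    exact hz.2

end GluedMetric

end IsAdaptedChart

theorem Metric.isTopologicalBasis_setOf_dist_lt {X : Type*} [PseudoMetricSpace X] :
    IsTopologicalBasis {B : Set X | ∃ x r, B = {y | dist x y < r}} := by
  refine isTopologicalBasis_of_isOpen_of_nhds ?_ fun a U ha hU => ?_
  · rintro _ ⟨x, r, rfl⟩
    simpa only [Metric.ball, dist_comm] using Metric.isOpen_ball (x := x) (ε := r)
  · obtain ⟨ε, hε, hsub⟩ := Metric.isOpen_iff.1 hU a ha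
    exact ⟨{y | dist a y < ε}, ⟨a, ε, rfl⟩, by simpa using hε,
      fun y hy => hsub (Metric.mem_ball'.2 hy)⟩

theorem exists_pseudoMetricSpace_locallyEq_chart {t : TopologicalSpace Z}
    (ht : t = generateFrom (chartBalls Zi di)) (hc : IsLocalMetricCover Zi di) {w : ι → Set Z}
    (hwo : ∀ p, IsOpen (w p)) (hwc : ⋃ p, w p = univ) (hwf : LocallyFinite fun p => closure (w p))
    (hwZ : ∀ p, closure (w p) ⊆ Zi p) :
    ∃ _ : PseudoMetricSpace Z, ∀ x, ∃ i, x ∈ Zi i ∧ ∃ ε > 0,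
      (∀ r ≤ ε, Metric.ball x r = chartBall Zi di i x r) ∧
      ∀ y ∈ chartBall Zi di i x ε, ∀ z ∈ chartBall Zi di i x ε, dist y z = di i y z := by
  have hwZ' (p : ι) : w p ⊆ Zi p := subset_closure.trans (hwZ p)
  let m := PseudoMetricSpace.ofPreNNDist (gluedDist w di)
    (gluedDist_self hwc fun p _ hu => hc.dist_self (hwZ' p hu))
    (gluedDist_comm fun p _ hu _ hv => hc.symm p _ (hwZ' p hu) _ (hwZ' p hv))
  have hD : IsGluedMetric w di := ⟨PseudoMetricSpace.dist_ofPreNNDist_le _ _ _,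
    fun _ hg => PseudoMetricSpace.sub_le_dist_ofPreNNDist _ _ _ hg⟩
  refine ⟨m, fun x => ?_⟩
  obtain ⟨i, η, hA⟩ := exists_isAdaptedChart ht hc hwo hwc hwf hwZ x
  exact ⟨i, hA.mem, η / 8, by linarith [hA.pos],
    fun r hr => hA.ball_eq_chartBall hc hwZ' hD hr,
    fun y hy z hz => hA.dist_eq hc hwZ' hD hy hz⟩

theorem eq_toTopologicalSpace_of_ball_eq_chartBall {t : TopologicalSpace Z}
    (ht : t = generateFrom (chartBalls Zi di)) (hc : IsLocalMetricCover Zi di)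
    (m : PseudoMetricSpace Z)
    (h : ∀ x, ∃ i, x ∈ Zi i ∧ ∃ ε > 0, ∀ r ≤ ε, Metric.ball x r = chartBall Zi di i x r) :
    t = m.toUniformSpace.toTopologicalSpace := by
  refine TopologicalSpace.ext_nhds fun x => ?_
  obtain ⟨i, hi, ε, hε, hball⟩ := h x
  refine (hasBasis_nhds_chartBall ht hc hi).ext Metric.nhds_basis_ball
    (fun r hr => ⟨min r ε, lt_min hr hε, ?_⟩) (fun r hr => ⟨min r ε, lt_min hr hε, ?_⟩)
  · rw [hball _ (min_le_right _ _)]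
    exact chartBall_mono i x (min_le_left _ _)
  · rw [← hball _ (min_le_right _ _)]
    exact Metric.ball_subset_ball (min_le_left _ _)

end LocalMetric

theorem hausdorff_paracompact_local_metric_space_is_metrizable_general
    {Z : Type*} {ι : Type*} (Zi : ι → Set Z) (di : ι → Z → Z → ℝ)
    (hcover : (⋃ i, Zi i) = Set.univ)
    -- each `d_i` is a metric on `Z_i`
    (hsymm : ∀ i, ∀ x ∈ Zi i, ∀ y ∈ Zi i, di i x y = di i y x)
    (hzero : ∀ i, ∀ x ∈ Zi i, ∀ y ∈ Zi i, (di i x y = 0 ↔ x = y))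
    (htri : ∀ i, ∀ x ∈ Zi i, ∀ y ∈ Zi i, ∀ z ∈ Zi i,
      di i x z ≤ di i x y + di i y z)
    -- overlaps are open in each of the metric spaces
    (hopen : ∀ i j, ∀ x ∈ Zi i ∩ Zi j, ∃ r > (0:ℝ),
      {y ∈ Zi i | di i x y < r} ⊆ Zi j)
    -- the metrics are locally equal on the overlaps
    (hlocal : ∀ i j, ∀ x ∈ Zi i ∩ Zi j, ∃ r > (0:ℝ),
      ∀ y ∈ Zi i ∩ Zi j, ∀ z ∈ Zi i ∩ Zi j,
        di i x y < r → di i x z < r → di i y z = di j y z) :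
    ∀ t : TopologicalSpace Z,
      t = TopologicalSpace.generateFrom
        {B | ∃ i, ∃ x ∈ Zi i, ∃ r : ℝ, B = {y ∈ Zi i | di i x y < r}} →
      @T2Space Z t → @ParacompactSpace Z t →
      ∃ D : Z → Z → ℝ,
        (∀ x y : Z, 0 ≤ D x y) ∧
        (∀ x y : Z, D x y = D y x) ∧
        (∀ x y : Z, (D x y = 0 ↔ x = y)) ∧
        (∀ x y z : Z, D x z ≤ D x y + D y z) ∧
        -- `D` induces the topology of `(Z, 𝔇)`
        (t = TopologicalSpace.generateFrom
          {B | ∃ x : Z, ∃ r : ℝ, B = {y | D x y < r}}) ∧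
        -- `D` agrees with some `d_i` near each point
        (∀ x : Z, ∃ i, x ∈ Zi i ∧ ∃ r > (0:ℝ),
          ∀ y z : Z, D x y < r → D x z < r →
            y ∈ Zi i ∧ z ∈ Zi i ∧ D y z = di i y z) := by
  intro t ht _ _
  have hc : IsLocalMetricCover Zi di := ⟨hcover, hsymm, hzero, htri, hopen, hlocal⟩
  obtain ⟨w, hwo, hwc, hwf, hwZ⟩ :=
    exists_isOpen_cover_locallyFinite_closure_subset (isOpen_chartDomain ht hc) hc.iUnion_eq
  obtain ⟨m, hm⟩ := exists_pseudoMetricSpace_locallyEq_chart ht hc hwo hwc hwf hwZ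
  refine ⟨dist, fun _ _ => dist_nonneg, dist_comm,
    fun x y => ⟨fun hxy => ?_, fun h => h ▸ dist_self x⟩, dist_triangle, ?_, fun x => ?_⟩
  · obtain ⟨i, hi, ε, hε, hball, hdist⟩ := hm x
    have hy : y ∈ chartBall Zi di i x ε := hball ε le_rfl ▸ Metric.mem_ball'.2 (hxy ▸ hε)
    exact (hc.eq_zero_iff i x hi y hy.1).1 (hdist x (hc.mem_chartBall_self hi hε) y hy ▸ hxy)
  · rw [eq_toTopologicalSpace_of_ball_eq_chartBall ht hc m fun x => ?_]
    · exact Metric.isTopologicalBasis_setOf_dist_lt.eq_generateFrom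
        (t := m.toUniformSpace.toTopologicalSpace)
    obtain ⟨i, hi, ε, hε, hball, -⟩ := hm x
    exact ⟨i, hi, ε, hε, hball⟩
  · obtain ⟨i, hi, ε, hε, hball, hdist⟩ := hm x
    refine ⟨i, hi, ε, hε, fun y z hy hz => ?_⟩
    rw [← Metric.mem_ball', hball ε le_rfl] at hy hz
    exact ⟨hy.1, hz.1, hdist y hy z hz⟩

/-- A Hausdorff paracompact local metric space `(Z, 𝔇)` — given by a cover
`{(Z_i, d_i)}` of `Z` by locally equal metric spaces, with the topology
generated by all the metric balls — is induced by a global metric: there is a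
metric `D` on `Z` inducing the same topology and agreeing, near each point,
with one of the metrics `d_i`. -/
theorem hausdorff_paracompact_local_metric_space_is_metrizable
    {Z : Type*} {ι : Type*} (Zi : ι → Set Z) (di : ι → Z → Z → ℝ)
    (hcover : (⋃ i, Zi i) = Set.univ)
    -- each `d_i` is a metric on `Z_i`
    (hnonneg : ∀ i, ∀ x ∈ Zi i, ∀ y ∈ Zi i, 0 ≤ di i x y)
    (hsymm : ∀ i, ∀ x ∈ Zi i, ∀ y ∈ Zi i, di i x y = di i y x)
    (hzero : ∀ i, ∀ x ∈ Zi i, ∀ y ∈ Zi i, (di i x y = 0 ↔ x = y))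
    (htri : ∀ i, ∀ x ∈ Zi i, ∀ y ∈ Zi i, ∀ z ∈ Zi i,
      di i x z ≤ di i x y + di i y z)
    -- overlaps are open in each of the metric spaces
    (hopen : ∀ i j, ∀ x ∈ Zi i ∩ Zi j, ∃ r > (0:ℝ),
      {y ∈ Zi i | di i x y < r} ⊆ Zi j)
    -- the metrics are locally equal on the overlaps
    (hlocal : ∀ i j, ∀ x ∈ Zi i ∩ Zi j, ∃ r > (0:ℝ),
      ∀ y ∈ Zi i ∩ Zi j, ∀ z ∈ Zi i ∩ Zi j,
        di i x y < r → di i x z < r → di i y z = di j y z) :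
    ∀ t : TopologicalSpace Z,
      t = TopologicalSpace.generateFrom
        {B | ∃ i, ∃ x ∈ Zi i, ∃ r : ℝ, B = {y ∈ Zi i | di i x y < r}} →
      @T2Space Z t → @ParacompactSpace Z t →
      ∃ D : Z → Z → ℝ,
        (∀ x y : Z, 0 ≤ D x y) ∧
        (∀ x y : Z, D x y = D y x) ∧
        (∀ x y : Z, (D x y = 0 ↔ x = y)) ∧
        (∀ x y z : Z, D x z ≤ D x y + D y z) ∧
        -- `D` induces the topology of `(Z, 𝔇)`
        (t = TopologicalSpace.generateFrom
          {B | ∃ x : Z, ∃ r : ℝ, B = {y | D x y < r}}) ∧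
        -- `D` agrees with some `d_i` near each point
        (∀ x : Z, ∃ i, x ∈ Zi i ∧ ∃ r > (0:ℝ),
          ∀ y z : Z, D x y < r → D x z < r →
            y ∈ Zi i ∧ z ∈ Zi i ∧ D y z = di i y z) :=
  hausdorff_paracompact_local_metric_space_is_metrizable_general Zi di hcover hsymm hzero htri hopen
    hlocal
end

section
/- Let P be the open upper half-plane, L the real axis, and Z = P ∪ L with the half-disk topology (basic open sets are Euclidean open subsets of P and sets {z} ∪ (P ∩ U) for z ∈ L and U a Euclidean open neighborhood of z in ℝ²). Then this topology is induced by the local metric represented by the family consisting of (P, d_P) together with (U_z, d_z) for z ∈ L, where U_z = {z} ∪ P and d_P, d_z are restrictions of the Euclidean metric; in particular, this family is a cover of Z by locally equal metric spaces and the topology it generates is the half-disk topology. -/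
open Set Topology

noncomputable section

/-- The plane as a Euclidean space. -/
abbrev EucPlane := EuclideanSpace ℝ (Fin 2)

/-- The open upper half-plane. -/
def upperP : Set EucPlane := {p | 0 < p 1}

/-- The real axis. -/
def axisL : Set EucPlane := {p | p 1 = 0}

/-- `Z = P ∪ L`. -/
def Zhd : Set EucPlane := upperP ∪ axisL

/-- `U_z = {z} ∪ P` for `z ∈ L`. -/
def Uz (z : EucPlane) : Set EucPlane := {z} ∪ upperP

/-- The half-disk topology on `Z = P ∪ L`: basic open sets are the Euclidean
open subsets of `P` and the sets `{z} ∪ (P ∩ U)` for `z ∈ L` and `U` a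
Euclidean open neighborhood of `z`. -/
def halfDiskTop : TopologicalSpace ↥Zhd :=
  TopologicalSpace.generateFrom
    ({s | ∃ u : Set EucPlane, IsOpen u ∧
        s = (Subtype.val : ↥Zhd → EucPlane) ⁻¹' (u ∩ upperP)} ∪
     {s | ∃ z ∈ axisL, ∃ u : Set EucPlane, IsOpen u ∧ z ∈ u ∧
        s = (Subtype.val : ↥Zhd → EucPlane) ⁻¹' ({z} ∪ (upperP ∩ u))})

/-- The topology on `Z` generated by the balls of the family of metric spaces
`(P, d_P)` and `(U_z, d_z)`, `z ∈ L`, where all metrics are restrictions of the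
Euclidean metric. -/
def ballTop : TopologicalSpace ↥Zhd :=
  TopologicalSpace.generateFrom
    ({s | ∃ x ∈ upperP, ∃ r : ℝ,
        s = (Subtype.val : ↥Zhd → EucPlane) ⁻¹' {y ∈ upperP | dist x y < r}} ∪
     {s | ∃ z ∈ axisL, ∃ x ∈ Uz z, ∃ r : ℝ,
        s = (Subtype.val : ↥Zhd → EucPlane) ⁻¹' {y ∈ Uz z | dist x y < r}})

lemma abs_sub_le_dist' (x y : EucPlane) : |x 1 - y 1| ≤ dist x y := by
  rw [EuclideanSpace.dist_eq, ← Real.dist_eq]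
  rw [Real.le_sqrt dist_nonneg (by positivity)]
  exact Finset.single_le_sum (f := fun i => dist (x i) (y i) ^ 2)
    (fun i _ => sq_nonneg _) (Finset.mem_univ 1)

/-- If `x` lies in the upper half plane and `z` on the axis, then the ball of
radius `x 1` around `x` inside `U_z` stays in the upper half plane. -/
lemma ball_subset_upper {z x : EucPlane} (hz : z ∈ axisL) (hx : x ∈ upperP) :
    ∀ y ∈ Uz z, dist x y < x 1 → y ∈ upperP := by
  intro y hy hdy
  rcases hy with hy | hy
  · exfalso
    rcases hy with rfl
    have h1 := abs_sub_le_dist' x y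
    rw [show y 1 = 0 from hz, sub_zero] at h1
    have h2 : x 1 ≤ dist x y := le_trans (le_abs_self _) h1
    linarith
  · exact hy

lemma hd_open1 (u : Set EucPlane) (hu : IsOpen u) :
    @IsOpen _ ballTop ((Subtype.val : ↥Zhd → EucPlane) ⁻¹' (u ∩ upperP)) := by
  letI : TopologicalSpace ↥Zhd := ballTop
  rw [isOpen_iff_forall_mem_open]
  rintro ⟨p, hpZ⟩ hp
  obtain ⟨r, hr, hball⟩ := Metric.isOpen_iff.1 hu p hp.1
  refine ⟨Subtype.val ⁻¹' {y ∈ upperP | dist p y < r}, ?_, ?_, ?_⟩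
  · rintro ⟨q, hqZ⟩ ⟨hq1, hq2⟩
    exact ⟨hball (by simpa [Metric.mem_ball, dist_comm] using hq2), hq1⟩
  · exact TopologicalSpace.GenerateOpen.basic _ (Or.inl ⟨p, hp.2, r, rfl⟩)
  · exact ⟨hp.2, by simpa using hr⟩

lemma hd_open2 (z : EucPlane) (hz : z ∈ axisL) (u : Set EucPlane)
    (hu : IsOpen u) (hzu : z ∈ u) :
    @IsOpen _ ballTop ((Subtype.val : ↥Zhd → EucPlane) ⁻¹' ({z} ∪ (upperP ∩ u))) := by
  letI : TopologicalSpace ↥Zhd := ballTop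
  rw [isOpen_iff_forall_mem_open]
  rintro ⟨p, hpZ⟩ hp
  rcases hp with hp | hp
  · simp only [mem_preimage, mem_singleton_iff] at hp
    subst hp
    obtain ⟨r, hr, hball⟩ := Metric.isOpen_iff.1 hu p hzu
    refine ⟨Subtype.val ⁻¹' {y ∈ Uz p | dist p y < r}, ?_, ?_, ?_⟩
    · rintro ⟨q, hqZ⟩ ⟨hq1, hq2⟩
      rcases hq1 with hq1 | hq1
      · exact Or.inl hq1
      · exact Or.inr ⟨hq1, hball (by simpa [Metric.mem_ball, dist_comm] using hq2)⟩
    · exact TopologicalSpace.GenerateOpen.basic _ (Or.inr ⟨p, hz, p, Or.inl rfl, r, rfl⟩)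
    · exact ⟨Or.inl rfl, by simpa using hr⟩
  · obtain ⟨r, hr, hball⟩ := Metric.isOpen_iff.1 hu p hp.2
    refine ⟨Subtype.val ⁻¹' {y ∈ upperP | dist p y < r}, ?_, ?_, ?_⟩
    · rintro ⟨q, hqZ⟩ ⟨hq1, hq2⟩
      exact Or.inr ⟨hq1, hball (by simpa [Metric.mem_ball, dist_comm] using hq2)⟩
    · exact TopologicalSpace.GenerateOpen.basic _ (Or.inl ⟨p, hp.1, r, rfl⟩)
    · exact ⟨hp.1, by simpa using hr⟩

lemma bt_open1 (x : EucPlane) (hx : x ∈ upperP) (r : ℝ) :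
    @IsOpen _ halfDiskTop ((Subtype.val : ↥Zhd → EucPlane) ⁻¹' {y ∈ upperP | dist x y < r}) := by
  have h : {y ∈ upperP | dist x y < r} = Metric.ball x r ∩ upperP := by
    ext y
    simp only [mem_setOf_eq, mem_inter_iff, Metric.mem_ball, dist_comm]
    tauto
  rw [h]
  exact TopologicalSpace.GenerateOpen.basic _ (Or.inl ⟨_, Metric.isOpen_ball, rfl⟩)

lemma bt_open2 (z : EucPlane) (hz : z ∈ axisL) (x : EucPlane) (hx : x ∈ Uz z) (r : ℝ) :
    @IsOpen _ halfDiskTop ((Subtype.val : ↥Zhd → EucPlane) ⁻¹' {y ∈ Uz z | dist x y < r}) := by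
  by_cases hc : dist x z < r
  · have h : {y ∈ Uz z | dist x y < r} = {z} ∪ (upperP ∩ Metric.ball x r) := by
      ext y
      constructor
      · rintro ⟨hy1 | hy1, hy2⟩
        · exact Or.inl hy1
        · exact Or.inr ⟨hy1, by simpa [Metric.mem_ball, dist_comm] using hy2⟩
      · rintro (hy | ⟨hy1, hy2⟩)
        · rcases hy with rfl
          exact ⟨Or.inl rfl, hc⟩
        · exact ⟨Or.inr hy1, by simpa [Metric.mem_ball, dist_comm] using hy2⟩
    rw [h]
    exact TopologicalSpace.GenerateOpen.basic _
      (Or.inr ⟨z, hz, Metric.ball x r, Metric.isOpen_ball,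
        by simpa [Metric.mem_ball, dist_comm] using hc, rfl⟩)
  · have h : {y ∈ Uz z | dist x y < r} = Metric.ball x r ∩ upperP := by
      ext y
      constructor
      · rintro ⟨hy1 | hy1, hy2⟩
        · exact absurd (hy1 ▸ hy2) hc
        · exact ⟨by simpa [Metric.mem_ball, dist_comm] using hy2, hy1⟩
      · rintro ⟨hy1, hy2⟩
        exact ⟨Or.inr hy2, by simpa [Metric.mem_ball, dist_comm] using hy1⟩
    rw [h]
    exact TopologicalSpace.GenerateOpen.basic _ (Or.inl ⟨_, Metric.isOpen_ball, rfl⟩)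

/-- The family `{(P, d_P)} ∪ {(U_z, d_z) : z ∈ L}` of restrictions of the
Euclidean metric is a cover of `Z = P ∪ L` by locally equal metric spaces
(it covers `Z` and the pairwise overlaps are open in each metric space — all
the metrics being restrictions of a single metric, they agree on overlaps),
and the topology it generates is exactly the half-disk topology. -/
theorem half_disk_topology_induced_by_local_metric :
    (upperP ∪ ⋃ z ∈ axisL, Uz z) = Zhd ∧
    -- each overlap `U_z ∩ P = P` is open in `(P, d_P)` and in `(U_z, d_z)`
    (∀ z ∈ axisL, ∀ x ∈ Uz z ∩ upperP, ∃ r > (0:ℝ),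
      {y ∈ Uz z | dist x y < r} ⊆ upperP) ∧
    -- the overlaps `U_z ∩ U_w` (`z ≠ w`) are open in the metric spaces
    (∀ z ∈ axisL, ∀ w ∈ axisL, z ≠ w → ∀ x ∈ Uz z ∩ Uz w, ∃ r > (0:ℝ),
      {y ∈ Uz z | dist x y < r} ⊆ Uz w) ∧
    -- the induced topology is the half-disk topology
    ballTop = halfDiskTop := by
  refine ⟨?_, ?_, ?_, ?_⟩
  · ext p
    simp only [Zhd, Uz, mem_union, mem_iUnion, mem_singleton_iff]
    constructor
    · rintro (hp | ⟨z, hz, rfl | hp⟩)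
      · exact Or.inl hp
      · exact Or.inr hz
      · exact Or.inl hp
    · rintro (hp | hp)
      · exact Or.inl hp
      · exact Or.inr ⟨p, hp, Or.inl rfl⟩
  · intro z hz x hx
    exact ⟨x 1, hx.2, fun y hy => ball_subset_upper hz hx.2 y hy.1 hy.2⟩
  · intro z hz w hw hne x hx
    have hxP : x ∈ upperP := by
      rcases hx.1 with rfl | h
      · rcases hx.2 with h' | h'
        · exact absurd h' hne
        · exact h'
      · exact h
    exact ⟨x 1, hxP, fun y hy =>
      Or.inr (ball_subset_upper hz hxP y hy.1 hy.2)⟩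
  · refine le_antisymm ?_ ?_
    · rw [halfDiskTop]
      apply le_generateFrom
      rintro s (⟨u, hu, rfl⟩ | ⟨z, hz, u, hu, hzu, rfl⟩)
      · exact hd_open1 u hu
      · exact hd_open2 z hz u hu hzu
    · rw [ballTop]
      apply le_generateFrom
      rintro s (⟨x, hx, r, rfl⟩ | ⟨z, hz, x, hx, r, rfl⟩)
      · exact bt_open1 x hx r
      · exact bt_open2 z hz x hx r

end
end
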